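/- arXiv:1301.1365 — 4 statements merged into one kernel-verified Lean document; each statement's English description precedes it below -/
import Mathlib

section
/- The Nordic decomposition is a bijection between connected heaps of polymers that are not pyramids, taken up to translation, and quadruples (C₁, k, H, P) where: C₁ is a connected heap of polymers taken up to translation; k is a non-negative integer; H is a heap all of whose polymers are contained in [0, k−1]; and P is a pyramid of left half-width greater than k, taken up to translation. Under this bijection, the total length of the heap equals the sum of the total lengths of C₁, H and P. -/
/-!
STATEMENT 9: The Nordic decomposition is a bijection between connected heaps of
polymers that are not pyramids (up to translation) and quadruples `(C₁, k, H, P)`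
where `C₁` is a connected heap (up to translation), `k : ℕ`, `H` is a heap all of
whose polymers are contained in `[0, k-1]`, and `P` is a pyramid of left
half-width greater than `k` (up to translation); the total length of the heap is
the sum of the total lengths of `C₁`, `H` and `P`.

Translation classes are normalized: for arbitrary heaps, by requiring the least
left endpoint of their polymers to be `0`; for pyramids, by requiring the minimal
polymer to have left endpoint `0`.
-/

/-- A polymer is a closed real interval `[i,j]` with integer endpoints `i < j`,
encoded by the pair of endpoints. -/
def Polymer : Type := {p : ℤ × ℤ // p.1 < p.2}

/-- The left endpoint of a polymer. -/
def Polymer.left (a : Polymer) : ℤ := a.1.1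

/-- The right endpoint of a polymer. -/
def Polymer.right (a : Polymer) : ℤ := a.1.2

/-- The length of a polymer `[i,j]` is `j - i` (a positive integer, recorded in `ℕ`). -/
def Polymer.len (a : Polymer) : ℕ := (a.1.2 - a.1.1).toNat

/-- Two polymers are concurrent if the closed intervals intersect (even in a point). -/
def Polymer.Concurrent (a b : Polymer) : Prop := a.left ≤ b.right ∧ b.left ≤ a.right

/-- One step of the commutation relation on sequences of polymers:
two adjacent non-concurrent polymers are transposed. -/
def HeapStep (L L' : List Polymer) : Prop :=
  ∃ (l₁ l₂ : List Polymer) (a b : Polymer), ¬ a.Concurrent b ∧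
    L = l₁ ++ a :: b :: l₂ ∧ L' = l₁ ++ b :: a :: l₂

/-- A heap of polymers: a finite sequence of polymers up to commutation of
adjacent non-concurrent polymers. -/
def Heap : Type := Quot HeapStep

/-- The multiset of polymers of a heap. -/
def Heap.toMultiset : Heap → Multiset Polymer :=
  Quot.lift (fun L => (L : Multiset Polymer)) (by
    rintro L L' ⟨l₁, l₂, a, b, -, rfl, rfl⟩
    exact Multiset.coe_eq_coe.mpr (List.Perm.append_left l₁ (List.Perm.swap b a l₂)))

/-- The total length of a heap: the sum of the lengths of its polymers. -/
def Heap.totalLength (H : Heap) : ℕ := (H.toMultiset.map Polymer.len).sum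

/-- A polymer `a` is minimal in the heap `H` if `H` can be written `a · H'`. -/
def Heap.IsMinimal (H : Heap) (a : Polymer) : Prop :=
  ∃ L : List Polymer, H = Quot.mk HeapStep (a :: L)

/-- A pyramid is a heap with a unique minimal polymer. -/
def Heap.IsPyramid (H : Heap) : Prop := ∃! a : Polymer, H.IsMinimal a

/-- The subset of `ℝ` covered by the polymers of a heap. -/
def Heap.space (H : Heap) : Set ℝ :=
  ⋃ p ∈ H.toMultiset, Set.Icc (p.1.1 : ℝ) (p.1.2 : ℝ)

/-- A heap is connected if it is nonempty and the union of its polymers is a real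
interval (an order-connected subset of `ℝ`). -/
def Heap.IsConnected (H : Heap) : Prop :=
  H.toMultiset ≠ 0 ∧ H.space.OrdConnected

/-- Normalization of a heap up to translation: the least left endpoint among its
polymers is `0`. -/
def Heap.Normalized (H : Heap) : Prop :=
  (∀ p ∈ H.toMultiset, 0 ≤ p.left) ∧ (∃ p ∈ H.toMultiset, p.left = 0)

/-- Normalization of a pyramid up to translation: its minimal polymer has left
endpoint `0`. -/
def Heap.PyramidNormalized (H : Heap) : Prop :=
  ∃ a : Polymer, H.IsMinimal a ∧ a.left = 0

/-- The pyramid `H` has left half-width `w`: its minimal polymer is `[a,b]` and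
the least left endpoint among its polymers is `a - w`. -/
def Heap.HasLeftHalfWidth (H : Heap) (w : ℕ) : Prop :=
  ∃ a : Polymer, H.IsMinimal a ∧ (∀ p ∈ H.toMultiset, a.left - (w : ℤ) ≤ p.left) ∧
    (∃ p ∈ H.toMultiset, p.left = a.left - (w : ℤ))

/-- The quadruples `(C₁, k, H, P)` appearing in the Nordic decomposition:
`C₁` is a connected heap (normalized up to translation), `k : ℕ`, `H` is a heap
all of whose polymers are contained in `[0, k-1]`, and `P` is a pyramid of left
half-width greater than `k` (normalized up to translation). -/
def NordicQuad (q : Heap × ℕ × Heap × Heap) : Prop :=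
  q.1.IsConnected ∧ q.1.Normalized ∧
  (∀ p ∈ q.2.2.1.toMultiset, 0 ≤ p.left ∧ p.right ≤ (q.2.1 : ℤ) - 1) ∧
  q.2.2.2.IsPyramid ∧ q.2.2.2.PyramidNormalized ∧
  (∃ w : ℕ, q.2.2.2.HasLeftHalfWidth w ∧ q.2.1 < w)

noncomputable section
attribute [local instance] Classical.propDecidable

open List

/-! ### Basic polymer lemmas -/

theorem Polymer.left_lt_right (a : Polymer) : a.left < a.right := a.2

theorem Polymer.concurrent_self (a : Polymer) : a.Concurrent a :=
  ⟨le_of_lt a.left_lt_right, le_of_lt a.left_lt_right⟩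

theorem Polymer.Concurrent.symm {a b : Polymer} (h : a.Concurrent b) : b.Concurrent a :=
  ⟨h.2, h.1⟩

theorem Polymer.not_concurrent_iff {a b : Polymer} :
    ¬ a.Concurrent b ↔ (b.right < a.left ∨ a.right < b.left) := by
  unfold Polymer.Concurrent; push_neg
  constructor
  · intro h; by_cases h1 : a.left ≤ b.right
    · exact Or.inr (h h1)
    · exact Or.inl (lt_of_not_ge h1)
  · rintro (h | h) h1
    · omega
    · omega

theorem Polymer.ne_of_not_concurrent {a b : Polymer} (h : ¬ a.Concurrent b) : a ≠ b := by
  rintro rfl; exact h (Polymer.concurrent_self a)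

/-- Equality of the word-quotient. -/
def heq (L L' : List Polymer) : Prop := Quot.mk HeapStep L = Quot.mk HeapStep L'

theorem heq.of_step {L L' : List Polymer} (h : HeapStep L L') : heq L L' := Quot.sound h

@[refl] theorem heq.refl (L : List Polymer) : heq L L := rfl

theorem heq.symm {L L' : List Polymer} (h : heq L L') : heq L' L := Eq.symm h

theorem heq.trans {L₁ L₂ L₃ : List Polymer} (h : heq L₁ L₂) (h' : heq L₂ L₃) : heq L₁ L₃ :=
  Eq.trans h h'

theorem HeapStep.symm {L L' : List Polymer} (h : HeapStep L L') : HeapStep L' L := by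
  obtain ⟨l₁, l₂, a, b, hab, rfl, rfl⟩ := h
  exact ⟨l₁, l₂, b, a, fun hc => hab hc.symm, rfl, rfl⟩

/-- Any function invariant under single steps is invariant under `heq`. -/
theorem heq.lift {β : Sort*} (f : List Polymer → β)
    (hf : ∀ a b, HeapStep a b → f a = f b) {L L' : List Polymer} (h : heq L L') :
    f L = f L' := by
  have : Quot.lift f hf (Quot.mk HeapStep L) = Quot.lift f hf (Quot.mk HeapStep L') :=
    congrArg _ h
  simpa using this

theorem heq.multiset {L L' : List Polymer} (h : heq L L') :
    (L : Multiset Polymer) = (L' : Multiset Polymer) := by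
  have := congrArg Heap.toMultiset h
  simpa [Heap.toMultiset] using this

theorem heq.mem {L L' : List Polymer} (h : heq L L') {a : Polymer} (ha : a ∈ L) : a ∈ L' := by
  have := h.multiset
  rw [Multiset.coe_eq_coe] at this
  exact this.mem_iff.mp ha

theorem heq.cons {L L' : List Polymer} (a : Polymer) (h : heq L L') : heq (a :: L) (a :: L') := by
  refine heq.lift (fun t => Quot.mk HeapStep (a :: t)) ?_ h
  rintro x y ⟨l₁, l₂, c, d, hcd, rfl, rfl⟩
  exact Quot.sound ⟨a :: l₁, l₂, c, d, hcd, rfl, rfl⟩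

theorem heq.append_left (u : List Polymer) {L L' : List Polymer} (h : heq L L') :
    heq (u ++ L) (u ++ L') := by
  induction u with
  | nil => exact h
  | cons a t ih => exact ih.cons a

theorem heq.append_right {L L' : List Polymer} (h : heq L L') (v : List Polymer) :
    heq (L ++ v) (L' ++ v) := by
  refine heq.lift (fun t => Quot.mk HeapStep (t ++ v)) ?_ h
  rintro x y ⟨l₁, l₂, c, d, hcd, rfl, rfl⟩
  exact Quot.sound ⟨l₁, l₂ ++ v, c, d, hcd, by simp, by simp⟩

theorem heq.append {L₁ L₂ M₁ M₂ : List Polymer} (h₁ : heq L₁ M₁) (h₂ : heq L₂ M₂) :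
    heq (L₁ ++ L₂) (M₁ ++ M₂) :=
  (h₁.append_right L₂).trans (heq.append_left M₁ h₂)

/-- basic swap at the front -/
theorem heq.swap {a b : Polymer} (hab : ¬ a.Concurrent b) (L : List Polymer) :
    heq (a :: b :: L) (b :: a :: L) :=
  heq.of_step ⟨[], L, a, b, hab, rfl, rfl⟩

/-- Pull an element past a list of polymers none of which is concurrent with it. -/
theorem heq.pull_front {x : Polymer} {u : List Polymer}
    (hu : ∀ y ∈ u, ¬ y.Concurrent x) (v : List Polymer) :
    heq (u ++ x :: v) (x :: (u ++ v)) := by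
  induction u with
  | nil => rfl
  | cons z u' ih =>
      have h1 : heq (z :: (u' ++ x :: v)) (z :: (x :: (u' ++ v))) :=
        (ih (fun y hy => hu y (mem_cons_of_mem z hy))).cons z
      have h2 : heq (z :: x :: (u' ++ v)) (x :: z :: (u' ++ v)) :=
        heq.swap (hu z (mem_cons_self)) _
      exact h1.trans h2

theorem heq.push_back {x : Polymer} {u : List Polymer}
    (hu : ∀ y ∈ u, ¬ y.Concurrent x) (v : List Polymer) :
    heq (x :: (u ++ v)) (u ++ x :: v) := (heq.pull_front hu v).symm

/-! ### Projection lemma -/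

/-- Projection of a word onto the pair of letters `a`, `b`. -/
def proj (a b : Polymer) (L : List Polymer) : List Polymer :=
  L.filter (fun c => c = a ∨ c = b)

theorem proj_cons (a b x : Polymer) (L : List Polymer) :
    proj a b (x :: L) = if x = a ∨ x = b then x :: proj a b L else proj a b L := by
  by_cases h : x = a ∨ x = b <;> simp [proj, h]

theorem proj_append (a b : Polymer) (u v : List Polymer) :
    proj a b (u ++ v) = proj a b u ++ proj a b v := by
  simp [proj]

theorem proj_eq_nil_iff {a b : Polymer} {u : List Polymer} :
    proj a b u = [] ↔ ∀ y ∈ u, ¬(y = a ∨ y = b) := by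
  simp [proj, List.filter_eq_nil_iff]

theorem mem_proj_of {a b y : Polymer} {u : List Polymer} (hy : y ∈ u) (h : y = a ∨ y = b) :
    y ∈ proj a b u := by
  simp [proj, List.mem_filter, hy, h]

theorem mem_of_mem_proj {a b y : Polymer} {u : List Polymer} (hy : y ∈ proj a b u) :
    y ∈ u ∧ (y = a ∨ y = b) := by
  have := List.mem_filter.mp hy
  exact ⟨this.1, by simpa using this.2⟩

theorem HeapStep.proj_eq {a b : Polymer} (hab : a.Concurrent b) {L L' : List Polymer}
    (h : HeapStep L L') : proj a b L = proj a b L' := by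
  obtain ⟨l₁, l₂, x, y, hxy, rfl, rfl⟩ := h
  simp only [proj_append, proj_cons]
  by_cases hx : x = a ∨ x = b <;> by_cases hy : y = a ∨ y = b
  · exfalso
    rcases hx with rfl | rfl <;> rcases hy with rfl | rfl
    · exact hxy (Polymer.concurrent_self _)
    · exact hxy hab
    · exact hxy hab.symm
    · exact hxy (Polymer.concurrent_self _)
  · rw [if_pos hx, if_neg hy, if_neg hy, if_pos hx]
  · rw [if_neg hx, if_pos hy, if_pos hy, if_neg hx]
  · rw [if_neg hx, if_neg hy, if_neg hy, if_neg hx]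

theorem heq.proj_eq {L L' : List Polymer} (h : heq L L') {a b : Polymer}
    (hab : a.Concurrent b) : proj a b L = proj a b L' :=
  heq.lift (proj a b) (fun _ _ hs => hs.proj_eq hab) h

/-- Split off the first occurrence of a member. -/
theorem exists_first_occ {x : Polymer} {L : List Polymer} (h : x ∈ L) :
    ∃ u v, L = u ++ x :: v ∧ x ∉ u := by
  induction L with
  | nil => cases h
  | cons z t ih =>
      by_cases hz : x = z
      · exact ⟨[], t, by simp [hz], by simp⟩
      · obtain ⟨u, v, rfl, hu⟩ := ih ((List.mem_cons.mp h).resolve_left hz)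
        exact ⟨z :: u, v, rfl, by simp [hu, hz]⟩

theorem heq_of_proj_eq : ∀ (L L' : List Polymer),
    (∀ a b : Polymer, a.Concurrent b → proj a b L = proj a b L') → heq L L' := by
  intro L
  induction L with
  | nil =>
      intro L' hp
      cases L' with
      | nil => rfl
      | cons y t =>
          exfalso
          have := hp y y (Polymer.concurrent_self y)
          simp [proj_cons, proj] at this
  | cons x t ih =>
      intro L' hp
      have hxL' : x ∈ L' := by
        have h1 := hp x x (Polymer.concurrent_self x)
        rw [proj_cons] at h1
        simp only [or_self, if_pos rfl] at h1
        have hx : x ∈ proj x x L' := h1 ▸ List.mem_cons_self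
        exact (mem_of_mem_proj hx).1
      obtain ⟨u, v, rfl, hxu⟩ := exists_first_occ hxL'
      -- every element of u is non-concurrent with x
      have hu : ∀ y ∈ u, ¬ y.Concurrent x := by
        intro y hy hc
        have hyx : y ≠ x := fun h => hxu (h ▸ hy)
        have h1 := hp x y hc.symm
        rw [proj_cons, proj_append, proj_cons] at h1
        rw [if_pos (Or.inl rfl), if_pos (Or.inl rfl)] at h1
        have hyu : y ∈ proj x y u := mem_proj_of hy (Or.inr rfl)
        have hne : proj x y u ≠ [] := fun h0 => by simp [h0] at hyu
        obtain ⟨z, w, hw⟩ := List.exists_cons_of_ne_nil hne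
        rw [hw, List.cons_append] at h1
        have hxz : x = z := (List.cons.injEq _ _ _ _).mp h1 |>.1
        have hz : z ∈ proj x y u := hw ▸ List.mem_cons_self
        exact hxu (hxz ▸ (mem_of_mem_proj hz).1)
      -- projections of t and u ++ v agree
      have hp' : ∀ a b : Polymer, a.Concurrent b → proj a b t = proj a b (u ++ v) := by
        intro a b hab
        have h0 := hp a b hab
        rw [proj_cons, proj_append, proj_cons] at h0
        by_cases hx' : x = a ∨ x = b
        · have hpu : proj a b u = [] := by
            rw [proj_eq_nil_iff]
            rintro y hy (rfl | rfl)
            · rcases hx' with rfl | rfl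
              · exact hxu hy
              · exact (hu y hy) hab
            · rcases hx' with rfl | rfl
              · exact (hu y hy) hab.symm
              · exact hxu hy
          rw [if_pos hx', if_pos hx', hpu] at h0
          rw [proj_append, hpu]
          simpa using h0
        · rw [if_neg hx', if_neg hx'] at h0
          rw [proj_append]; exact h0
      have htuv : heq t (u ++ v) := ih (u ++ v) hp'
      exact ((htuv.cons x).trans (heq.push_back hu v))

theorem heq_iff_proj_eq {L L' : List Polymer} :
    heq L L' ↔ (∀ a b : Polymer, a.Concurrent b → proj a b L = proj a b L') :=
  ⟨fun h a b hab => h.proj_eq hab, heq_of_proj_eq L L'⟩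

/-- Left cancellation. -/
theorem heq.cancel {x : Polymer} {t t' : List Polymer} (h : heq (x :: t) (x :: t')) :
    heq t t' := by
  apply heq_of_proj_eq
  intro a b hab
  have h1 := h.proj_eq hab
  rw [proj_cons, proj_cons] at h1
  by_cases hx : x = a ∨ x = b
  · rw [if_pos hx, if_pos hx] at h1; exact List.tail_eq_of_cons_eq h1
  · rwa [if_neg hx, if_neg hx] at h1

/-- Characterization of minimal polymers. -/
theorem isMinimal_iff {L : List Polymer} {a : Polymer} :
    Heap.IsMinimal (Quot.mk HeapStep L) a ↔
      ∃ u v, L = u ++ a :: v ∧ ∀ y ∈ u, ¬ y.Concurrent a := by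
  constructor
  · rintro ⟨T, hT⟩
    have h : heq L (a :: T) := hT
    have haL : a ∈ L := h.symm.mem (List.mem_cons_self)
    obtain ⟨u, v, rfl, hau⟩ := exists_first_occ haL
    refine ⟨u, v, rfl, ?_⟩
    intro y hy hc
    have hya : y ≠ a := fun hh => hau (hh ▸ hy)
    have h1 := h.proj_eq (a := a) (b := y) hc.symm
    rw [proj_append, proj_cons, proj_cons] at h1
    rw [if_pos (Or.inl rfl), if_pos (Or.inl rfl)] at h1
    have hyu : y ∈ proj a y u := mem_proj_of hy (Or.inr rfl)
    have hne : proj a y u ≠ [] := fun h0 => by simp [h0] at hyu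
    obtain ⟨z, w, hw⟩ := List.exists_cons_of_ne_nil hne
    rw [hw, List.cons_append] at h1
    have hza : z = a := ((List.cons.injEq _ _ _ _).mp h1.symm |>.1).symm
    have hz : z ∈ proj a y u := hw ▸ List.mem_cons_self
    exact hau (hza ▸ (mem_of_mem_proj hz).1)
  · rintro ⟨u, v, rfl, hu⟩
    exact ⟨u ++ v, heq.pull_front hu v⟩

theorem isMinimal_mem {H : Heap} {a : Polymer} (h : H.IsMinimal a) : a ∈ H.toMultiset := by
  obtain ⟨T, rfl⟩ := h
  simp [Heap.toMultiset]

/-- Two distinct minimal polymers are not concurrent. -/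
theorem isMinimal_not_concurrent {H : Heap} {a b : Polymer} (ha : H.IsMinimal a)
    (hb : H.IsMinimal b) (hab : a ≠ b) : ¬ a.Concurrent b := by
  obtain ⟨T, rfl⟩ := ha
  rw [isMinimal_iff] at hb
  obtain ⟨u, v, huv, hu⟩ := hb
  intro hc
  cases u with
  | nil =>
      simp only [List.nil_append] at huv
      exact hab ((List.cons.injEq _ _ _ _).mp huv).1
  | cons z u' =>
      have hza : z = a := by
        rw [List.cons_append] at huv
        exact (((List.cons.injEq _ _ _ _).mp huv).1).symm
      exact hu z (List.mem_cons_self) (hza ▸ hc)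
/-! ### Translation -/

def Polymer.tr (t : ℤ) (a : Polymer) : Polymer :=
  ⟨(a.1.1 + t, a.1.2 + t), by have := a.2; simp only []; omega⟩

@[simp] theorem Polymer.tr_left (t : ℤ) (a : Polymer) : (a.tr t).left = a.left + t := rfl
@[simp] theorem Polymer.tr_right (t : ℤ) (a : Polymer) : (a.tr t).right = a.right + t := rfl
@[simp] theorem Polymer.tr_len (t : ℤ) (a : Polymer) : (a.tr t).len = a.len := by
  simp only [Polymer.len, Polymer.tr]
  congr 1; omega

@[simp] theorem Polymer.tr_tr (s t : ℤ) (a : Polymer) : (a.tr s).tr t = a.tr (s + t) := by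
  apply Subtype.ext
  show ((a.1.1 + s + t, a.1.2 + s + t) : ℤ × ℤ) = (a.1.1 + (s + t), a.1.2 + (s + t))
  rw [Prod.mk.injEq]; omega

@[simp] theorem Polymer.tr_zero (a : Polymer) : a.tr 0 = a := by
  unfold Polymer.tr
  cases a with
  | mk p h => simp; rfl

theorem Polymer.tr_inj {t : ℤ} {a b : Polymer} (h : a.tr t = b.tr t) : a = b := by
  have := congrArg (fun x => x.tr (-t)) h
  simpa using this

@[simp] theorem Polymer.tr_concurrent_iff (t : ℤ) (a b : Polymer) :
    (a.tr t).Concurrent (b.tr t) ↔ a.Concurrent b := by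
  show a.left + t ≤ b.right + t ∧ b.left + t ≤ a.right + t ↔ _
  unfold Polymer.Concurrent; omega

def trL (t : ℤ) (L : List Polymer) : List Polymer := L.map (Polymer.tr t)

@[simp] theorem trL_nil (t : ℤ) : trL t [] = [] := rfl
@[simp] theorem trL_cons (t : ℤ) (a : Polymer) (L : List Polymer) :
    trL t (a :: L) = a.tr t :: trL t L := rfl
@[simp] theorem trL_append (t : ℤ) (u v : List Polymer) :
    trL t (u ++ v) = trL t u ++ trL t v := List.map_append
@[simp] theorem trL_trL (s t : ℤ) (L : List Polymer) : trL t (trL s L) = trL (s + t) L := by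
  simp [trL, Function.comp_def]
@[simp] theorem trL_zero (L : List Polymer) : trL 0 L = L := by
  induction L with
  | nil => rfl
  | cons a t ih => simp [trL] at ih ⊢; exact ih

theorem heq.translate {L L' : List Polymer} (t : ℤ) (h : heq L L') : heq (trL t L) (trL t L') := by
  refine heq.lift (fun u => Quot.mk HeapStep (trL t u)) ?_ h
  rintro x y ⟨l₁, l₂, a, b, hab, rfl, rfl⟩
  refine Quot.sound ⟨trL t l₁, trL t l₂, a.tr t, b.tr t, ?_, by simp [trL], by simp [trL]⟩
  simpa using hab

/-- Translation of heaps. -/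
def Heap.tr (t : ℤ) : Heap → Heap :=
  Quot.lift (fun L => Quot.mk HeapStep (trL t L))
    (fun _ _ hs => heq.of_step hs |>.translate t)

@[simp] theorem Heap.tr_mk (t : ℤ) (L : List Polymer) :
    Heap.tr t (Quot.mk HeapStep L) = Quot.mk HeapStep (trL t L) := rfl

@[simp] theorem Heap.tr_tr (s t : ℤ) (H : Heap) : (H.tr s).tr t = H.tr (s + t) := by
  induction H using Quot.ind; simp; rfl

@[simp] theorem Heap.tr_zero (H : Heap) : H.tr 0 = H := by
  induction H using Quot.ind; simp; rfl

@[simp] theorem Heap.tr_toMultiset (t : ℤ) (H : Heap) :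
    (H.tr t).toMultiset = H.toMultiset.map (Polymer.tr t) := by
  induction H using Quot.ind with
  | mk L => simp [Heap.toMultiset, trL]

theorem Heap.tr_isMinimal_iff (t : ℤ) (H : Heap) (a : Polymer) :
    (H.tr t).IsMinimal (a.tr t) ↔ H.IsMinimal a := by
  induction H using Quot.ind with
  | mk L =>
    constructor
    · rintro ⟨T, hT⟩
      have h : heq (trL t L) (a.tr t :: T) := hT
      have h2 := h.translate (-t)
      simp only [trL_trL, add_neg_cancel, trL_zero, trL_cons, Polymer.tr_tr,
        Polymer.tr_zero] at h2
      exact ⟨trL (-t) T, h2⟩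
    · rintro ⟨T, hT⟩
      have h : heq L (a :: T) := hT
      exact ⟨trL t T, h.translate t⟩

@[simp] theorem Heap.tr_totalLength (t : ℤ) (H : Heap) :
    (H.tr t).totalLength = H.totalLength := by
  rw [Heap.totalLength, Heap.totalLength, Heap.tr_toMultiset, Multiset.map_map]
  congr 1; apply Multiset.map_congr rfl; intro x _; simp [Function.comp]
/-! ### The scan splitting a word into the pyramid part and the rest -/

/-- `split S t = (p, q)` where `p` is the subword of letters connected upward to `S`
and `q` the complementary subword. -/
def split : Set Polymer → List Polymer → List Polymer × List Polymer
  | _, [] => ([], [])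
  | S, x :: t =>
    if ∃ c ∈ S, c.Concurrent x then
      (x :: (split (insert x S) t).1, (split (insert x S) t).2)
    else
      ((split S t).1, x :: (split S t).2)

@[simp] theorem split_nil (S : Set Polymer) : split S [] = ([], []) := rfl

theorem split_cons (S : Set Polymer) (x : Polymer) (t : List Polymer) :
    split S (x :: t) =
      if ∃ c ∈ S, c.Concurrent x then
        (x :: (split (insert x S) t).1, (split (insert x S) t).2)
      else
        ((split S t).1, x :: (split S t).2) := by
  rw [split]

theorem split_multiset (S : Set Polymer) (t : List Polymer) :
    ((split S t).1 : Multiset Polymer) + ((split S t).2 : Multiset Polymer) =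
      (t : Multiset Polymer) := by
  induction t generalizing S with
  | nil => simp
  | cons x t ih =>
      rw [split_cons]
      by_cases h : ∃ c ∈ S, c.Concurrent x
      · rw [if_pos h]
        have h2 := ih (insert x S)
        rw [← Multiset.cons_coe, ← Multiset.cons_coe, Multiset.cons_add, h2]
      · rw [if_neg h]
        have h2 := ih S
        rw [← Multiset.cons_coe, ← Multiset.cons_coe, Multiset.add_cons, h2]

theorem split_fst_subset {S : Set Polymer} {t : List Polymer} {x : Polymer}
    (h : x ∈ (split S t).1) : x ∈ t := by
  have := split_multiset S t
  have : x ∈ ((split S t).1 : Multiset Polymer) + ((split S t).2 : Multiset Polymer) := by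
    rw [Multiset.mem_add]; exact Or.inl (by simpa using h)
  rw [split_multiset] at this
  simpa using this

theorem split_snd_subset {S : Set Polymer} {t : List Polymer} {x : Polymer}
    (h : x ∈ (split S t).2) : x ∈ t := by
  have : x ∈ ((split S t).1 : Multiset Polymer) + ((split S t).2 : Multiset Polymer) := by
    rw [Multiset.mem_add]; exact Or.inr (by simpa using h)
  rw [split_multiset] at this
  simpa using this

/-- Letters in the second component are not concurrent with anything in `S`. -/
theorem split_snd_not_concurrent {S : Set Polymer} {t : List Polymer} :
    ∀ x ∈ (split S t).2, ∀ c ∈ S, ¬ c.Concurrent x := by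
  induction t generalizing S with
  | nil => simp
  | cons y t ih =>
      intro x hx c hc
      rw [split_cons] at hx
      by_cases h : ∃ c ∈ S, c.Concurrent y
      · rw [if_pos h] at hx
        exact ih x hx c (Set.mem_insert_of_mem _ hc)
      · rw [if_neg h] at hx
        rcases List.mem_cons.mp hx with rfl | hx'
        · exact fun hcx => h ⟨c, hc, hcx⟩
        · exact ih x hx' c hc

/-- The word is equivalent to (second part) ++ (first part). -/
theorem split_shuffle (S : Set Polymer) (t : List Polymer) :
    heq t ((split S t).2 ++ (split S t).1) := by
  induction t generalizing S with
  | nil => rfl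
  | cons x t ih =>
      rw [split_cons]
      by_cases h : ∃ c ∈ S, c.Concurrent x
      · rw [if_pos h]
        simp only
        -- x :: t ≋ x :: (q' ++ p') ≋ q' ++ x :: p'
        have h1 : heq (x :: t)
            (x :: ((split (insert x S) t).2 ++ (split (insert x S) t).1)) :=
          (ih (insert x S)).cons x
        have h2 : ∀ y ∈ (split (insert x S) t).2, ¬ y.Concurrent x := by
          intro y hy hc
          exact split_snd_not_concurrent y hy x (Set.mem_insert _ _) hc.symm
        exact h1.trans (heq.push_back h2 _)
      · rw [if_neg h]
        simp only
        exact ((ih S).cons x)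

/-- If the second component starts with `b`, then `b` occurs in `t` with all previous
letters not concurrent with it. -/
theorem split_snd_head {S : Set Polymer} {t : List Polymer} {b : Polymer}
    {q' : List Polymer} (h : (split S t).2 = b :: q') :
    ∃ u v, t = u ++ b :: v ∧ ∀ y ∈ u, ¬ y.Concurrent b := by
  induction t generalizing S with
  | nil => simp at h
  | cons x t ih =>
      rw [split_cons] at h
      by_cases hx : ∃ c ∈ S, c.Concurrent x
      · rw [if_pos hx] at h
        simp only at h
        obtain ⟨u, v, rfl, hu⟩ := ih h
        refine ⟨x :: u, v, rfl, ?_⟩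
        intro y hy
        rcases List.mem_cons.mp hy with h1 | hy'
        · subst h1
          intro hc
          have hb : b ∈ (split (insert y S) (u ++ b :: v)).2 := by
            rw [h]; exact List.mem_cons_self
          exact split_snd_not_concurrent b hb y (Set.mem_insert _ _) hc
        · exact hu y hy'
      · rw [if_neg hx] at h
        simp only at h
        obtain ⟨hb, hq⟩ := (List.cons.injEq _ _ _ _).mp h
        subst hb
        exact ⟨[], t, rfl, by simp⟩

/-- Any letter of the first component has an earlier concurrent witness. -/
theorem split_fst_witness {S : Set Polymer} {t u₁ v₁ : List Polymer} {b : Polymer}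
    (h : (split S t).1 = u₁ ++ b :: v₁) :
    ∃ c, (c ∈ S ∨ c ∈ u₁) ∧ c.Concurrent b := by
  induction t generalizing S u₁ with
  | nil =>
      exfalso
      have : ([] : List Polymer) = u₁ ++ b :: v₁ := h
      exact List.not_mem_nil (a := b) (this ▸ (List.mem_append.mpr (Or.inr (List.mem_cons_self))))
  | cons x t ih =>
      rw [split_cons] at h
      by_cases hx : ∃ c ∈ S, c.Concurrent x
      · rw [if_pos hx] at h
        simp only at h
        cases u₁ with
        | nil =>
            simp only [List.nil_append] at h
            have hbx : x = b := ((List.cons.injEq _ _ _ _).mp h).1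
            obtain ⟨c, hc, hcx⟩ := hx
            exact ⟨c, Or.inl hc, hbx ▸ hcx⟩
        | cons z u₁' =>
            rw [List.cons_append] at h
            have hz : x = z := ((List.cons.injEq _ _ _ _).mp h).1
            have h' : (split (insert x S) t).1 = u₁' ++ b :: v₁ :=
              ((List.cons.injEq _ _ _ _).mp h).2
            obtain ⟨c, hc, hcb⟩ := ih h'
            rcases hc with hc | hc
            · rcases Set.mem_insert_iff.mp hc with rfl | hc'
              · exact ⟨c, Or.inr (hz ▸ List.mem_cons_self), hcb⟩
              · exact ⟨c, Or.inl hc', hcb⟩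
            · exact ⟨c, Or.inr (List.mem_cons_of_mem _ hc), hcb⟩
      · rw [if_neg hx] at h
        simp only at h
        exact ih h

/-- If a prefix consists of letters not concurrent with anything in `S`,
they all go into the second component. -/
theorem split_append_of_not_concurrent {S : Set Polymer} {u : List Polymer}
    (hu : ∀ x ∈ u, ∀ c ∈ S, ¬ c.Concurrent x) (v : List Polymer) :
    split S (u ++ v) = ((split S v).1, u ++ (split S v).2) := by
  induction u with
  | nil => simp
  | cons x u' ih =>
      rw [List.cons_append, split_cons]
      have hx : ¬ ∃ c ∈ S, c.Concurrent x := by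
        rintro ⟨c, hc, hcx⟩
        exact hu x (List.mem_cons_self) c hc hcx
      rw [if_neg hx, ih (fun y hy => hu y (List.mem_cons_of_mem _ hy))]
      simp
/-! ### Invariance of the scan under heap equality -/

theorem exists_concurrent_insert {S : Set Polymer} {x y : Polymer} (hxy : ¬ x.Concurrent y) :
    (∃ c ∈ insert x S, c.Concurrent y) ↔ (∃ c ∈ S, c.Concurrent y) := by
  constructor
  · rintro ⟨c, hc, hcy⟩
    rcases Set.mem_insert_iff.mp hc with rfl | hc'
    · exact absurd hcy hxy
    · exact ⟨c, hc', hcy⟩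
  · rintro ⟨c, hc, hcy⟩
    exact ⟨c, Set.mem_insert_of_mem _ hc, hcy⟩

theorem split_cons_pos {S : Set Polymer} {x : Polymer} (t : List Polymer)
    (h : ∃ c ∈ S, c.Concurrent x) :
    split S (x :: t) = (x :: (split (insert x S) t).1, (split (insert x S) t).2) := by
  rw [split_cons, if_pos h]

theorem split_cons_neg {S : Set Polymer} {x : Polymer} (t : List Polymer)
    (h : ¬ ∃ c ∈ S, c.Concurrent x) :
    split S (x :: t) = ((split S t).1, x :: (split S t).2) := by
  rw [split_cons, if_neg h]

theorem split_step (S : Set Polymer) {L L' : List Polymer} (h : HeapStep L L') :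
    Quot.mk HeapStep (split S L).1 = Quot.mk HeapStep (split S L').1 ∧
    Quot.mk HeapStep (split S L).2 = Quot.mk HeapStep (split S L').2 := by
  obtain ⟨l₁, l₂, x, y, hxy, rfl, rfl⟩ := h
  have hyx : ¬ y.Concurrent x := fun hc => hxy hc.symm
  induction l₁ generalizing S with
  | nil =>
      simp only [List.nil_append]
      by_cases hx : ∃ c ∈ S, c.Concurrent x <;> by_cases hy : ∃ c ∈ S, c.Concurrent y
      · rw [split_cons_pos _ hx, split_cons_pos _ ((exists_concurrent_insert hxy).mpr hy),
            split_cons_pos _ hy, split_cons_pos _ ((exists_concurrent_insert hyx).mpr hx),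
            Set.insert_comm]
        exact ⟨heq.swap hxy _, rfl⟩
      · rw [split_cons_pos _ hx,
            split_cons_neg _ (fun hh => hy ((exists_concurrent_insert hxy).mp hh)),
            split_cons_neg _ hy, split_cons_pos _ hx]
        exact ⟨rfl, rfl⟩
      · rw [split_cons_neg _ hx, split_cons_pos _ hy,
            split_cons_pos _ hy,
            split_cons_neg _ (fun hh => hx ((exists_concurrent_insert hyx).mp hh))]
        exact ⟨rfl, rfl⟩
      · rw [split_cons_neg _ hx, split_cons_neg _ hy,
            split_cons_neg _ hy, split_cons_neg _ hx]
        exact ⟨rfl, heq.swap hxy _⟩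
  | cons z l₁' ih =>
      rw [List.cons_append, List.cons_append, split_cons, split_cons]
      by_cases hz : ∃ c ∈ S, c.Concurrent z
      · rw [if_pos hz, if_pos hz]
        obtain ⟨h1, h2⟩ := ih (insert z S)
        exact ⟨(heq.cons z h1 : heq _ _), h2⟩
      · rw [if_neg hz, if_neg hz]
        obtain ⟨h1, h2⟩ := ih S
        exact ⟨h1, (heq.cons z h2 : heq _ _)⟩

theorem split_heq (S : Set Polymer) {L L' : List Polymer} (h : heq L L') :
    heq (split S L).1 (split S L').1 ∧ heq (split S L).2 (split S L').2 := by
  have := heq.lift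
    (fun t => (Quot.mk HeapStep (split S t).1, Quot.mk HeapStep (split S t).2))
    (fun a b hs => by
      obtain ⟨h1, h2⟩ := split_step S hs
      simp only [Prod.mk.injEq]
      exact ⟨h1, h2⟩) h
  exact ⟨congrArg Prod.fst this, congrArg Prod.snd this⟩

theorem split_trL (S : Set Polymer) (t : ℤ) (L : List Polymer) :
    split (Polymer.tr t '' S) (trL t L) =
      (trL t (split S L).1, trL t (split S L).2) := by
  induction L generalizing S with
  | nil => simp
  | cons x l ih =>
      rw [trL_cons, split_cons, split_cons]
      have hiff : (∃ c ∈ Polymer.tr t '' S, c.Concurrent (x.tr t)) ↔ ∃ c ∈ S, c.Concurrent x := by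
        constructor
        · rintro ⟨c, ⟨d, hd, rfl⟩, hc⟩
          exact ⟨d, hd, (Polymer.tr_concurrent_iff t d x).mp hc⟩
        · rintro ⟨c, hc, hcx⟩
          exact ⟨c.tr t, ⟨c, hc, rfl⟩, (Polymer.tr_concurrent_iff t c x).mpr hcx⟩
      by_cases hx : ∃ c ∈ S, c.Concurrent x
      · rw [if_pos hx, if_pos (hiff.mpr hx)]
        have : Polymer.tr t '' insert x S = insert (x.tr t) (Polymer.tr t '' S) := by
          rw [Set.image_insert_eq]
        rw [← this, ih (insert x S)]
        simp
      · rw [if_neg hx, if_neg (fun hh => hx (hiff.mp hh))]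
        rw [ih S]
        simp

/-! ### Pyramids and the scan -/

/-- In a pyramid `α :: T`, every letter of `T` goes into the first component. -/
theorem split_snd_nil_of_pyramid {α : Polymer} {T : List Polymer}
    (hpyr : Heap.IsPyramid (Quot.mk HeapStep (α :: T))) :
    (split {α} T).2 = [] := by
  by_contra hne
  obtain ⟨b, q', hb⟩ := List.exists_cons_of_ne_nil hne
  obtain ⟨u, v, rfl, hu⟩ := split_snd_head hb
  have hbS : ∀ c ∈ ({α} : Set Polymer), ¬ c.Concurrent b := by
    intro c hc
    have : b ∈ (split {α} (u ++ b :: v)).2 := by rw [hb]; exact List.mem_cons_self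
    exact split_snd_not_concurrent b this c hc
  have hαb : ¬ α.Concurrent b := hbS α rfl
  -- b is minimal
  have hbmin : Heap.IsMinimal (Quot.mk HeapStep (α :: (u ++ b :: v))) b := by
    rw [isMinimal_iff]
    refine ⟨α :: u, v, by simp, ?_⟩
    intro y hy
    rcases List.mem_cons.mp hy with h1 | hy'
    · subst h1; exact fun hc => hαb hc
    · exact hu y hy'
  have hαmin : Heap.IsMinimal (Quot.mk HeapStep (α :: (u ++ b :: v))) α :=
    ⟨u ++ b :: v, rfl⟩
  obtain ⟨m, hm, huniq⟩ := hpyr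
  have h1 : b = m := huniq b hbmin
  have h2 : α = m := huniq α hαmin
  exact (Polymer.ne_of_not_concurrent hαb) (h2.trans h1.symm)

/-- Conversely, the heap `α :: p` where `p = (split {α} T).1` is a pyramid. -/
theorem pyramid_of_split {α : Polymer} {T : List Polymer} {S : Set Polymer} (hS : S = {α}) :
    ∀ b, Heap.IsMinimal (Quot.mk HeapStep (α :: (split S T).1)) b → b = α := by
  intro b hb
  rw [isMinimal_iff] at hb
  obtain ⟨u, v, huv, hu⟩ := hb
  cases u with
  | nil => exact (((List.cons.injEq _ _ _ _).mp huv).1).symm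
  | cons z u' =>
      exfalso
      rw [List.cons_append] at huv
      obtain ⟨hz, hp⟩ := (List.cons.injEq _ _ _ _).mp huv
      subst hz
      obtain ⟨c, hc, hcb⟩ := split_fst_witness hp
      rcases hc with hc | hc
      · rw [hS] at hc
        have hceq : c = α := Set.mem_singleton_iff.mp hc
        exact hu c (by rw [hceq]; exact List.mem_cons_self) hcb
      · exact hu c (List.mem_cons_of_mem _ hc) hcb
/-! ### Extremal elements of multisets -/

theorem Multiset.exists_min_image_pol (s : Multiset Polymer) (f : Polymer → ℤ) (hs : s ≠ 0) :
    ∃ a ∈ s, ∀ b ∈ s, f a ≤ f b := by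
  induction s using Multiset.induction_on with
  | empty => exact absurd rfl hs
  | cons a t ih =>
      by_cases ht : t = 0
      · subst ht
        exact ⟨a, Multiset.mem_cons_self a 0, by intro b hb; rw [Multiset.mem_cons] at hb
                                                 rcases hb with rfl | hb
                                                 · exact le_refl _
                                                 · simp at hb⟩
      · obtain ⟨c, hc, hmin⟩ := ih ht
        by_cases hac : f a ≤ f c
        · refine ⟨a, Multiset.mem_cons_self a t, ?_⟩
          intro b hb
          rcases Multiset.mem_cons.mp hb with rfl | hb
          · exact le_refl _
          · exact le_trans hac (hmin b hb)
        · refine ⟨c, Multiset.mem_cons_of_mem hc, ?_⟩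
          intro b hb
          rcases Multiset.mem_cons.mp hb with rfl | hb
          · exact le_of_not_ge hac
          · exact hmin b hb

theorem Multiset.exists_max_image_pol (s : Multiset Polymer) (f : Polymer → ℤ) (hs : s ≠ 0) :
    ∃ a ∈ s, ∀ b ∈ s, f b ≤ f a := by
  obtain ⟨a, ha, h⟩ := Multiset.exists_min_image_pol s (fun p => - f p) hs
  exact ⟨a, ha, fun b hb => by have := h b hb; omega⟩

/-! ### Connectivity (components) -/

/-- Two polymers of `M` are linked if both lie in `M` and they are concurrent. -/
def Link (M : Multiset Polymer) (a b : Polymer) : Prop :=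
  a ∈ M ∧ b ∈ M ∧ a.Concurrent b

/-- Connectivity within the multiset `M`. -/
def Reach (M : Multiset Polymer) : Polymer → Polymer → Prop :=
  Relation.ReflTransGen (Link M)

theorem Link.symm' {M : Multiset Polymer} {a b : Polymer} (h : Link M a b) : Link M b a :=
  ⟨h.2.1, h.1, h.2.2.symm⟩

theorem Reach.symm' {M : Multiset Polymer} {a b : Polymer} (h : Reach M a b) : Reach M b a := by
  induction h with
  | refl => exact Relation.ReflTransGen.refl
  | tail _ hlink ih =>
      exact Relation.ReflTransGen.trans (Relation.ReflTransGen.single hlink.symm') ih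

theorem Reach.trans' {M : Multiset Polymer} {a b c : Polymer} (h : Reach M a b)
    (h' : Reach M b c) : Reach M a c := Relation.ReflTransGen.trans h h'

theorem Reach.mem_right {M : Multiset Polymer} {a b : Polymer} (hab : a ∈ M)
    (h : Reach M a b) : b ∈ M := by
  induction h with
  | refl => exact hab
  | tail _ hlink _ => exact hlink.2.1

/-- If a letter is not concurrent with anything reachable, reach stays below `z`. -/
theorem reach_right_lt {M : Multiset Polymer} {m p : Polymer} {z : ℝ}
    (h : Reach M m p)
    (hnc : ∀ q : Polymer, q ∈ M → Reach M m q → ¬((q.left : ℝ) ≤ z ∧ z ≤ (q.right : ℝ)))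
    (hm : (m.right : ℝ) < z) : (p.right : ℝ) < z := by
  induction h with
  | refl => exact hm
  | @tail b c hreach hlink ih =>
      have hcM : c ∈ M := hlink.2.1
      have hreach' : Reach M m c := hreach.tail hlink
      have hnc' := hnc c hcM hreach'
      have hbc := hlink.2.2
      -- b.right < z and b concurrent c: c.left ≤ b.right < z
      have hcl : (c.left : ℝ) < z := lt_of_le_of_lt (by exact_mod_cast Int.cast_le.mpr hbc.2) ih
      by_contra hcr
      push_neg at hcr
      exact hnc' ⟨le_of_lt hcl, hcr⟩

theorem reach_left_gt {M : Multiset Polymer} {m p : Polymer} {z : ℝ}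
    (h : Reach M m p)
    (hnc : ∀ q : Polymer, q ∈ M → Reach M m q → ¬((q.left : ℝ) ≤ z ∧ z ≤ (q.right : ℝ)))
    (hm : z < (m.left : ℝ)) : z < (p.left : ℝ) := by
  induction h with
  | refl => exact hm
  | @tail b c hreach hlink ih =>
      have hcM : c ∈ M := hlink.2.1
      have hreach' : Reach M m c := hreach.tail hlink
      have hnc' := hnc c hcM hreach'
      have hbc := hlink.2.2
      have hcr : z < (c.right : ℝ) := lt_of_lt_of_le ih (by exact_mod_cast Int.cast_le.mpr hbc.1)
      by_contra hcl
      push_neg at hcl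
      exact hnc' ⟨hcl, le_of_lt hcr⟩

/-- The space of a reachability class is order-connected. -/
theorem reach_class_ordConnected (M : Multiset Polymer) (m : Polymer) (hm : m ∈ M) :
    Set.OrdConnected (⋃ p ∈ {p : Polymer | p ∈ M ∧ Reach M m p},
      Set.Icc (p.left : ℝ) (p.right : ℝ)) := by
  constructor
  rintro x hx y hy z hz
  simp only [Set.mem_iUnion, Set.mem_Icc] at hx hy ⊢
  obtain ⟨p, ⟨hpM, hpr⟩, hpx⟩ := hx
  obtain ⟨q, ⟨hqM, hqr⟩, hqy⟩ := hy
  obtain ⟨hzx, hzy⟩ := hz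
  by_cases hcov : ∃ c : Polymer, (c ∈ M ∧ Reach M m c) ∧ (c.left : ℝ) ≤ z ∧ z ≤ (c.right : ℝ)
  · obtain ⟨c, hc1, hc2⟩ := hcov
    exact ⟨c, hc1, hc2⟩
  · exfalso
    have hnc : ∀ q : Polymer, q ∈ M → Reach M m q →
        ¬((q.left : ℝ) ≤ z ∧ z ≤ (q.right : ℝ)) := by
      intro q hqM hqr h
      exact hcov ⟨q, ⟨hqM, hqr⟩, h⟩
    -- m avoids z, so m is on one side
    have hmz := hnc m hm Relation.ReflTransGen.refl
    rcases lt_or_ge z (m.left : ℝ) with hside | hside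
    · -- everything strictly right of z; contradicts p covering x ≤ z
      have := reach_left_gt hpr hnc hside
      exact absurd (le_trans hpx.1 hzx) (not_le.mpr this)
    · have hmr : (m.right : ℝ) < z := by
        by_contra hh
        push_neg at hh
        exact hmz ⟨hside, hh⟩
      have := reach_right_lt hqr hnc hmr
      exact absurd (le_trans hzy hqy.2) (not_le.mpr this)

/-- Letters not reachable from the leftmost element lie strictly to the right
of the whole class. -/
theorem not_reach_right {M : Multiset Polymer} {m x₀ : Polymer} (hm : m ∈ M)
    (hmin : ∀ p ∈ M, m.left ≤ p.left)
    (hx₀ : x₀ ∈ M ∧ Reach M m x₀)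
    (hx₀max : ∀ p ∈ M, Reach M m p → p.right ≤ x₀.right)
    {y : Polymer} (hy : y ∈ M) (hyr : ¬ Reach M m y) :
    x₀.right < y.left := by
  -- y is not concurrent with any class member
  have hync : ∀ c ∈ M, Reach M m c → ¬ c.Concurrent y := by
    intro c hcM hcr hcy
    exact hyr (hcr.tail ⟨hcM, hy, hcy⟩)
  have hmy : ¬ m.Concurrent y := hync m hm Relation.ReflTransGen.refl
  rcases Polymer.not_concurrent_iff.mp hmy with h | h
  · -- y.right < m.left: impossible since m.left ≤ y.left < y.right
    have := hmin y hy
    have := y.left_lt_right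
    omega
  · -- m.right < y.left; suppose y.left ≤ x₀.right, find a covering class member
    by_contra hcon
    push_neg at hcon
    -- (y.left : ℝ) lies between m.right ∈ class space and x₀.right ∈ class space
    have h1 : ((m.right : ℝ)) ∈ (⋃ p ∈ {p : Polymer | p ∈ M ∧ Reach M m p},
        Set.Icc (p.left : ℝ) (p.right : ℝ)) := by
      simp only [Set.mem_iUnion, Set.mem_Icc]
      exact ⟨m, ⟨hm, Relation.ReflTransGen.refl⟩,
        ⟨by exact_mod_cast le_of_lt m.left_lt_right, le_refl _⟩⟩
    have h2 : ((x₀.right : ℝ)) ∈ (⋃ p ∈ {p : Polymer | p ∈ M ∧ Reach M m p},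
        Set.Icc (p.left : ℝ) (p.right : ℝ)) := by
      simp only [Set.mem_iUnion, Set.mem_Icc]
      exact ⟨x₀, ⟨hx₀.1, hx₀.2⟩,
        ⟨by exact_mod_cast le_of_lt x₀.left_lt_right, le_refl _⟩⟩
    have hmem := (reach_class_ordConnected M m hm).out h1 h2
      (⟨by exact_mod_cast le_of_lt h, by exact_mod_cast hcon⟩ :
        (y.left : ℝ) ∈ Set.Icc ((m.right : ℝ)) ((x₀.right : ℝ)))
    simp only [Set.mem_iUnion, Set.mem_Icc] at hmem
    obtain ⟨c, ⟨hcM, hcr⟩, hc1, hc2⟩ := hmem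
    refine hync c hcM hcr ⟨?_, by exact_mod_cast hc2⟩
    have : (c.left : ℝ) ≤ (y.right : ℝ) :=
      le_trans hc1 (by exact_mod_cast le_of_lt y.left_lt_right)
    exact_mod_cast this

/-- In a heap with order-connected space, everything is reachable from the
leftmost polymer. -/
theorem all_reach_of_ordConnected {M : Multiset Polymer} {m : Polymer} (hm : m ∈ M)
    (hmin : ∀ p ∈ M, m.left ≤ p.left)
    (hconn : Set.OrdConnected (⋃ p ∈ M, Set.Icc (p.left : ℝ) (p.right : ℝ))) :
    ∀ y ∈ M, Reach M m y := by
  intro y hy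
  by_contra hyr
  -- class of m and its maximal right element x₀
  have hclassne : ∃ x₀, (x₀ ∈ M ∧ Reach M m x₀) ∧
      ∀ p ∈ M, Reach M m p → p.right ≤ x₀.right := by
    -- take max right over the class: the class is a sub-multiset; use filter
    obtain ⟨a, ha, hmax⟩ := Multiset.exists_max_image_pol
      (M.filter (fun p => Reach M m p)) Polymer.right (by
        intro h0
        have : m ∈ M.filter (fun p => Reach M m p) :=
          Multiset.mem_filter.mpr ⟨hm, Relation.ReflTransGen.refl⟩
        rw [h0] at this
        simp at this)
    obtain ⟨haM, har⟩ := Multiset.mem_filter.mp ha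
    exact ⟨a, ⟨haM, har⟩, fun p hp hpr =>
      hmax p (Multiset.mem_filter.mpr ⟨hp, hpr⟩)⟩
  obtain ⟨x₀, hx₀, hx₀max⟩ := hclassne
  have hsep := not_reach_right hm hmin hx₀ hx₀max hy hyr
  -- the point x₀.right + 1/2 must be in the space
  have h1 : ((x₀.right : ℝ)) ∈ (⋃ p ∈ M, Set.Icc (p.left : ℝ) (p.right : ℝ)) := by
    simp only [Set.mem_iUnion, Set.mem_Icc]
    exact ⟨x₀, hx₀.1, ⟨by exact_mod_cast le_of_lt x₀.left_lt_right, le_refl _⟩⟩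
  have h2 : ((y.left : ℝ)) ∈ (⋃ p ∈ M, Set.Icc (p.left : ℝ) (p.right : ℝ)) := by
    simp only [Set.mem_iUnion, Set.mem_Icc]
    exact ⟨y, hy, ⟨le_refl _, by exact_mod_cast le_of_lt y.left_lt_right⟩⟩
  have hww : ((x₀.right : ℝ) + 1/2) ∈ (⋃ p ∈ M, Set.Icc (p.left : ℝ) (p.right : ℝ)) := by
    refine hconn.out h1 h2 ⟨by linarith, ?_⟩
    have : (x₀.right : ℝ) + 1 ≤ (y.left : ℝ) := by exact_mod_cast hsep
    linarith
  simp only [Set.mem_iUnion, Set.mem_Icc] at hww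
  obtain ⟨q, hqM, hq1, hq2⟩ := hww
  -- q.left ≤ x₀.right + 1/2 and q.right ≥ x₀.right + 1/2, integers:
  have hql : q.left ≤ x₀.right := by
    by_contra hh
    push_neg at hh
    have h3 : (x₀.right : ℝ) + 1 ≤ (q.left : ℝ) := by exact_mod_cast hh
    linarith
  have hqr : x₀.right + 1 ≤ q.right := by
    by_contra hh
    push_neg at hh
    have h3 : (q.right : ℝ) ≤ (x₀.right : ℝ) := by exact_mod_cast (by omega : q.right ≤ x₀.right)
    linarith
  by_cases hqreach : Reach M m q
  · exact absurd (hx₀max q hqM hqreach) (by omega)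
  · have := not_reach_right hm hmin hx₀ hx₀max hqM hqreach
    omega
/-! ### Filters, partitions, spaces -/

def filterP (P : Polymer → Prop) (L : List Polymer) : List Polymer :=
  L.filter (fun x => P x)

@[simp] theorem filterP_nil (P : Polymer → Prop) : filterP P [] = [] := rfl

theorem filterP_cons (P : Polymer → Prop) (x : Polymer) (L : List Polymer) :
    filterP P (x :: L) = if P x then x :: filterP P L else filterP P L := by
  by_cases h : P x <;> simp [filterP, h]

theorem filterP_append (P : Polymer → Prop) (u v : List Polymer) :
    filterP P (u ++ v) = filterP P u ++ filterP P v := by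
  simp [filterP]

theorem filterP_eq_self {P : Polymer → Prop} {L : List Polymer} (h : ∀ x ∈ L, P x) :
    filterP P L = L := by
  induction L with
  | nil => rfl
  | cons x t ih =>
      rw [filterP_cons, if_pos (h x (List.mem_cons_self)),
        ih (fun y hy => h y (List.mem_cons_of_mem _ hy))]

theorem filterP_eq_nil {P : Polymer → Prop} {L : List Polymer} (h : ∀ x ∈ L, ¬ P x) :
    filterP P L = [] := by
  induction L with
  | nil => rfl
  | cons x t ih =>
      rw [filterP_cons, if_neg (h x (List.mem_cons_self))]
      exact ih (fun y hy => h y (List.mem_cons_of_mem _ hy))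

theorem mem_filterP {P : Polymer → Prop} {L : List Polymer} {x : Polymer} :
    x ∈ filterP P L ↔ x ∈ L ∧ P x := by
  simp [filterP]

/-- The heap of a filtered word only depends on the heap of the word. -/
theorem heq.filter_heq {L L' : List Polymer} (h : heq L L') (P : Polymer → Prop) :
    heq (filterP P L) (filterP P L') := by
  refine heq.lift (fun u => Quot.mk HeapStep (filterP P u)) ?_ h
  rintro a b ⟨l₁, l₂, x, y, hxy, rfl, rfl⟩
  simp only [filterP_append, filterP_cons]
  by_cases hx : P x <;> by_cases hy : P y
  · rw [if_pos hx, if_pos hy, if_pos hy, if_pos hx]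
    exact heq.append_left _ (heq.swap hxy _)
  · rw [if_pos hx, if_neg hy, if_neg hy, if_pos hx]
  · rw [if_neg hx, if_pos hy, if_pos hy, if_neg hx]
  · rw [if_neg hx, if_neg hy, if_neg hy, if_neg hx]

/-- A word whose letters split into two mutually non-concurrent groups is
equivalent to the concatenation of the two groups. -/
theorem partition_shuffle {P : Polymer → Prop} {L : List Polymer}
    (h : ∀ x ∈ L, ∀ y ∈ L, P x → ¬ P y → ¬ x.Concurrent y) :
    heq L (filterP P L ++ filterP (fun x => ¬ P x) L) := by
  induction L with
  | nil => rfl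
  | cons x t ih =>
      have ht : ∀ x ∈ t, ∀ y ∈ t, P x → ¬ P y → ¬ x.Concurrent y :=
        fun a ha b hb => h a (List.mem_cons_of_mem _ ha) b (List.mem_cons_of_mem _ hb)
      rw [filterP_cons, filterP_cons]
      by_cases hx : P x
      · rw [if_pos hx, if_neg (fun hh => hh hx)]
        exact (ih ht).cons x
      · rw [if_neg hx, if_pos hx]
        have h1 : heq (x :: t) (x :: (filterP P t ++ filterP (fun y => ¬ P y) t)) :=
          (ih ht).cons x
        refine h1.trans ?_
        have h2 : ∀ y ∈ filterP P t, ¬ y.Concurrent x := by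
          intro y hy
          obtain ⟨hyt, hPy⟩ := mem_filterP.mp hy
          exact h y (List.mem_cons_of_mem _ hyt) x (List.mem_cons_self) hPy hx
        have h3 := heq.pull_front h2 (filterP (fun y => ¬ P y) t)
        exact h3.symm

/-! ### Space lemmas -/

theorem Heap.space_mk (L : List Polymer) :
    Heap.space (Quot.mk HeapStep L) =
      ⋃ p ∈ (L : Multiset Polymer), Set.Icc ((p.left : ℝ)) ((p.right : ℝ)) := rfl

theorem mem_space_iff {H : Heap} {z : ℝ} :
    z ∈ H.space ↔ ∃ p ∈ H.toMultiset, (p.left : ℝ) ≤ z ∧ z ≤ (p.right : ℝ) := by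
  unfold Heap.space
  simp only [Set.mem_iUnion, Set.mem_Icc]
  exact ⟨fun ⟨p, hp, h⟩ => ⟨p, hp, h⟩, fun ⟨p, hp, h⟩ => ⟨p, hp, h⟩⟩

/-- Space only depends on the multiset. -/
theorem space_congr {H H' : Heap} (h : H.toMultiset = H'.toMultiset) : H.space = H'.space := by
  unfold Heap.space
  rw [h]

theorem mem_space_tr_iff {H : Heap} {t : ℤ} {z : ℝ} :
    z ∈ (H.tr t).space ↔ (z - (t : ℝ)) ∈ H.space := by
  rw [mem_space_iff, mem_space_iff]
  constructor
  · rintro ⟨p, hp, h1, h2⟩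
    rw [Heap.tr_toMultiset] at hp
    obtain ⟨q, hq, rfl⟩ := Multiset.mem_map.mp hp
    refine ⟨q, hq, ?_, ?_⟩
    · have : ((q.left + t : ℤ) : ℝ) ≤ z := by simpa using h1
      push_cast at this ⊢; linarith
    · have : z ≤ ((q.right + t : ℤ) : ℝ) := by simpa using h2
      push_cast at this ⊢; linarith
  · rintro ⟨p, hp, h1, h2⟩
    refine ⟨p.tr t, ?_, ?_, ?_⟩
    · rw [Heap.tr_toMultiset]
      exact Multiset.mem_map_of_mem _ hp
    · push_cast [Polymer.tr_left]; linarith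
    · push_cast [Polymer.tr_right]; linarith

theorem ordConnected_space_tr {H : Heap} (t : ℤ) (h : H.space.OrdConnected) :
    (H.tr t).space.OrdConnected := by
  constructor
  intro x hx y hy z hz
  rw [mem_space_tr_iff] at hx hy ⊢
  exact h.out hx hy ⟨by linarith [hz.1], by linarith [hz.2]⟩

/-! ### Total length -/

theorem totalLength_mk (L : List Polymer) :
    Heap.totalLength (Quot.mk HeapStep L) = (L.map Polymer.len).sum := by
  unfold Heap.totalLength Heap.toMultiset
  simp

theorem totalLength_append (u v : List Polymer) :
    Heap.totalLength (Quot.mk HeapStep (u ++ v)) =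
      Heap.totalLength (Quot.mk HeapStep u) + Heap.totalLength (Quot.mk HeapStep v) := by
  simp [totalLength_mk]
/-! ### More heap-level machinery -/

/-- Concatenation of heaps. -/
def Heap.app (H₁ H₂ : Heap) : Heap :=
  Quot.lift (fun L₁ => Quot.lift (fun L₂ => Quot.mk HeapStep (L₁ ++ L₂))
      (fun _ _ h => (heq.of_step h).append_left L₁) H₂)
    (fun _ _ h => by
      induction H₂ using Quot.ind with
      | mk L₂ => exact (heq.of_step h).append_right L₂) H₁

@[simp] theorem Heap.app_mk (L₁ L₂ : List Polymer) :
    Heap.app (Quot.mk HeapStep L₁) (Quot.mk HeapStep L₂) = Quot.mk HeapStep (L₁ ++ L₂) := rfl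

theorem nonempty_list_of_multiset {L : List Polymer}
    (h : Heap.toMultiset (Quot.mk HeapStep L) ≠ 0) : L ≠ [] := by
  intro hL
  subst hL
  simp [Heap.toMultiset] at h

/-- Spec'd maximum of `Polymer.right` over a heap. -/
def mxR (s : Multiset Polymer) : ℤ :=
  if h : s ≠ 0 then (Classical.choose (Multiset.exists_max_image_pol s Polymer.right h)).right
  else 0

theorem mxR_spec {s : Multiset Polymer} (h : s ≠ 0) :
    (∀ p ∈ s, p.right ≤ mxR s) ∧ (∃ p ∈ s, p.right = mxR s) := by
  rw [mxR, dif_pos h]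
  obtain ⟨ha, hmax⟩ := Classical.choose_spec (Multiset.exists_max_image_pol s Polymer.right h)
  exact ⟨hmax, ⟨_, ha, rfl⟩⟩

theorem mxR_unique {s : Multiset Polymer} {r : ℤ} (h : s ≠ 0)
    (h1 : ∀ p ∈ s, p.right ≤ r) (h2 : ∃ p ∈ s, p.right = r) : mxR s = r := by
  obtain ⟨hle, q, hq, hqr⟩ := mxR_spec h
  obtain ⟨p, hp, hpr⟩ := h2
  have := h1 q hq
  have := hle p hp
  omega

/-- Spec'd minimum of `Polymer.left` over a heap. -/
def mnL (s : Multiset Polymer) : ℤ :=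
  if h : s ≠ 0 then (Classical.choose (Multiset.exists_min_image_pol s Polymer.left h)).left
  else 0

theorem mnL_spec {s : Multiset Polymer} (h : s ≠ 0) :
    (∀ p ∈ s, mnL s ≤ p.left) ∧ (∃ p ∈ s, p.left = mnL s) := by
  rw [mnL, dif_pos h]
  obtain ⟨ha, hmin⟩ := Classical.choose_spec (Multiset.exists_min_image_pol s Polymer.left h)
  exact ⟨hmin, ⟨_, ha, rfl⟩⟩

theorem mnL_unique {s : Multiset Polymer} {r : ℤ} (h : s ≠ 0)
    (h1 : ∀ p ∈ s, r ≤ p.left) (h2 : ∃ p ∈ s, p.left = r) : mnL s = r := by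
  obtain ⟨hle, q, hq, hql⟩ := mnL_spec h
  obtain ⟨p, hp, hpl⟩ := h2
  have := h1 q hq
  have := hle p hp
  omega

/-- Every nonempty heap has a minimal polymer. -/
theorem exists_minimal {H : Heap} (h : H.toMultiset ≠ 0) : ∃ a, H.IsMinimal a := by
  induction H using Quot.ind with
  | mk L =>
      cases L with
      | nil => simp [Heap.toMultiset] at h
      | cons x t => exact ⟨x, t, rfl⟩

/-- A nonempty heap has a rightmost minimal polymer. -/
theorem exists_rightmost_minimal (H : Heap) (hne : H.toMultiset ≠ 0) :
    ∃ a, H.IsMinimal a ∧ ∀ b, H.IsMinimal b → b.left ≤ a.left := by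
  have hfil : H.toMultiset.filter (fun p => H.IsMinimal p) ≠ 0 := by
    obtain ⟨a, ha⟩ := exists_minimal hne
    intro h0
    have : a ∈ H.toMultiset.filter (fun p => H.IsMinimal p) :=
      Multiset.mem_filter.mpr ⟨isMinimal_mem ha, ha⟩
    rw [h0] at this
    simp at this
  obtain ⟨a, ha, hmax⟩ := Multiset.exists_max_image_pol _ Polymer.left hfil
  · obtain ⟨haM, hamin⟩ := Multiset.mem_filter.mp ha
    exact ⟨a, hamin, fun b hb =>
      hmax b (Multiset.mem_filter.mpr ⟨isMinimal_mem hb, hb⟩)⟩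

theorem rightmost_minimal_unique {H : Heap} {a b : Polymer}
    (ha : H.IsMinimal a ∧ ∀ c, H.IsMinimal c → c.left ≤ a.left)
    (hb : H.IsMinimal b ∧ ∀ c, H.IsMinimal c → c.left ≤ b.left) : a = b := by
  by_contra hne
  have hnc := isMinimal_not_concurrent ha.1 hb.1 hne
  have h1 := ha.2 b hb.1
  have h2 := hb.2 a ha.1
  have h3 := a.left_lt_right
  have h4 := b.left_lt_right
  rcases Polymer.not_concurrent_iff.mp hnc with h | h <;> omega

theorem Heap.tr_isPyramid (t : ℤ) (H : Heap) (h : H.IsPyramid) : (H.tr t).IsPyramid := by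
  obtain ⟨a, ha, huniq⟩ := h
  refine ⟨a.tr t, (Heap.tr_isMinimal_iff t H a).mpr ha, ?_⟩
  intro b hb
  have hb' : H.IsMinimal (b.tr (-t)) := by
    rw [← Heap.tr_isMinimal_iff t H]
    have : (b.tr (-t)).tr t = b := by rw [Polymer.tr_tr]; simp
    rwa [this]
  have := huniq _ hb'
  have : (b.tr (-t)).tr t = a.tr t := by rw [this]
  rwa [Polymer.tr_tr, neg_add_cancel, Polymer.tr_zero] at this

theorem Heap.tr_isPyramid_iff (t : ℤ) (H : Heap) : (H.tr t).IsPyramid ↔ H.IsPyramid := by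
  constructor
  · intro h
    have := Heap.tr_isPyramid (-t) _ h
    rwa [Heap.tr_tr, add_neg_cancel, Heap.tr_zero] at this
  · exact Heap.tr_isPyramid t H

/-- First element of a list satisfying a predicate. -/
theorem exists_first_satisfying {P : Polymer → Prop} {L : List Polymer}
    (h : ∃ x ∈ L, P x) : ∃ u x v, L = u ++ x :: v ∧ P x ∧ ∀ y ∈ u, ¬ P y := by
  induction L with
  | nil => simp at h
  | cons z t ih =>
      by_cases hz : P z
      · exact ⟨[], z, t, rfl, hz, by simp⟩
      · obtain ⟨x, hx, hPx⟩ := h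
        rcases List.mem_cons.mp hx with rfl | hx'
        · exact absurd hPx hz
        · obtain ⟨u, x', v, rfl, h1, h2⟩ := ih ⟨x, hx', hPx⟩
          refine ⟨z :: u, x', v, rfl, h1, ?_⟩
          intro y hy
          rcases List.mem_cons.mp hy with rfl | hy'
          · exact hz
          · exact h2 y hy'

/-- The space of a pyramid is order-connected. -/
theorem pyramid_space_ordConnected {H : Heap} (h : H.IsPyramid) : H.space.OrdConnected := by
  induction H using Quot.ind with
  | mk L =>
  constructor
  intro x hx y hy z hz
  erw [mem_space_iff] at hx hy ⊢
  obtain ⟨p, hp, hpx⟩ := hx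
  obtain ⟨q, hq, hqy⟩ := hy
  by_cases hcov : ∃ c ∈ Heap.toMultiset (Quot.mk HeapStep L),
      (c.left : ℝ) ≤ z ∧ z ≤ (c.right : ℝ)
  · exact hcov
  · exfalso
    have hmem : ∀ c : Polymer, c ∈ L ↔ c ∈ Heap.toMultiset (Quot.mk HeapStep L) := by
      intro c; simp [Heap.toMultiset]
    have hside : ∀ c ∈ L, (c.right : ℝ) < z ∨ z < (c.left : ℝ) := by
      intro c hc
      by_contra hcon
      push_neg at hcon
      exact hcov ⟨c, (hmem c).mp hc, hcon.2, hcon.1⟩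
    -- p is strictly left of z, q strictly right of z
    have hpL : p ∈ L := (hmem p).mpr hp
    have hqL : q ∈ L := (hmem q).mpr hq
    have hpz : (p.right : ℝ) < z := by
      rcases hside p hpL with h1 | h1
      · exact h1
      · exact absurd (le_trans hpx.1 hz.1) (not_le.mpr h1)
    have hqz : z < (q.left : ℝ) := by
      rcases hside q hqL with h1 | h1
      · exact absurd (le_trans hz.2 hqy.2) (not_le.mpr h1)
      · exact h1
    -- first element strictly right of z is minimal
    obtain ⟨u₂, q', v₂, hL₂, hq', hu₂⟩ :=
      exists_first_satisfying (P := fun c => z < (c.left : ℝ)) ⟨q, hqL, hqz⟩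
    have hq'min : Heap.IsMinimal (Quot.mk HeapStep L) q' := by
      rw [isMinimal_iff]
      refine ⟨u₂, v₂, hL₂, ?_⟩
      intro w hw hc
      have hwL : w ∈ L := by rw [hL₂]; exact List.mem_append.mpr (Or.inl hw)
      have hw1 : (w.right : ℝ) < z := by
        rcases hside w hwL with h1 | h1
        · exact h1
        · exact absurd h1 (hu₂ w hw)
      have : q'.left ≤ w.right := hc.2
      have : (q'.left : ℝ) ≤ (w.right : ℝ) := by exact_mod_cast this
      linarith
    -- first element strictly left of z is minimal
    obtain ⟨u₁, p', v₁, hL₁, hp', hu₁⟩ :=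
      exists_first_satisfying (P := fun c => (c.right : ℝ) < z) ⟨p, hpL, hpz⟩
    have hp'min : Heap.IsMinimal (Quot.mk HeapStep L) p' := by
      rw [isMinimal_iff]
      refine ⟨u₁, v₁, hL₁, ?_⟩
      intro w hw hc
      have hwL : w ∈ L := by rw [hL₁]; exact List.mem_append.mpr (Or.inl hw)
      have hw1 : z < (w.left : ℝ) := by
        rcases hside w hwL with h1 | h1
        · exact absurd h1 (hu₁ w hw)
        · exact h1
      have : w.left ≤ p'.right := hc.1
      have : (w.left : ℝ) ≤ (p'.right : ℝ) := by exact_mod_cast this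
      linarith
    obtain ⟨a, _, huniq⟩ := h
    have h1 := huniq q' hq'min
    have h2 := huniq p' hp'min
    have : p' = q' := h2.trans h1.symm
    rw [this] at hp'
    have := q'.left_lt_right
    have : (q'.left : ℝ) < (q'.right : ℝ) := by exact_mod_cast this
    linarith

/-- `split` with empty second component keeps the word. -/
theorem split_fst_eq_of_snd_nil {S : Set Polymer} {t : List Polymer}
    (h : (split S t).2 = []) : (split S t).1 = t := by
  induction t generalizing S with
  | nil => simp
  | cons x t ih =>
      rw [split_cons] at h ⊢
      by_cases hx : ∃ c ∈ S, c.Concurrent x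
      · rw [if_pos hx] at h ⊢
        simp only at h ⊢
        rw [ih h]
      · rw [if_neg hx] at h
        simp at h

/-- Scanning the first component again keeps everything. -/
theorem split_idem (S : Set Polymer) (t : List Polymer) :
    (split S ((split S t).1)).2 = [] := by
  induction t generalizing S with
  | nil => simp
  | cons x t ih =>
      rw [split_cons]
      by_cases hx : ∃ c ∈ S, c.Concurrent x
      · rw [if_pos hx]
        simp only
        rw [split_cons_pos _ hx]
        exact ih (insert x S)
      · rw [if_neg hx]
        simp only
        exact ih S

theorem space_append (u v : List Polymer) :
    Heap.space (Quot.mk HeapStep (u ++ v)) =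
      Heap.space (Quot.mk HeapStep u) ∪ Heap.space (Quot.mk HeapStep v) := by
  apply Set.ext
  intro z
  erw [Set.mem_union, mem_space_iff, mem_space_iff, mem_space_iff]
  constructor
  · rintro ⟨p, hp, h1⟩
    simp only [Heap.toMultiset] at hp
    rw [Multiset.mem_coe, List.mem_append] at hp
    rcases hp with hp | hp
    · exact Or.inl ⟨p, by simpa [Heap.toMultiset] using hp, h1⟩
    · exact Or.inr ⟨p, by simpa [Heap.toMultiset] using hp, h1⟩
  · rintro (⟨p, hp, h1⟩ | ⟨p, hp, h1⟩)
    · refine ⟨p, ?_, h1⟩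
      simp only [Heap.toMultiset] at hp ⊢
      rw [Multiset.mem_coe, List.mem_append]
      exact Or.inl (by simpa using hp)
    · refine ⟨p, ?_, h1⟩
      simp only [Heap.toMultiset] at hp ⊢
      rw [Multiset.mem_coe, List.mem_append]
      exact Or.inr (by simpa using hp)

/-- Union of two order-connected sets sharing a point. -/
theorem ordConnected_union {s t : Set ℝ} (hs : s.OrdConnected) (ht : t.OrdConnected)
    {c : ℝ} (hcs : c ∈ s) (hct : c ∈ t) : (s ∪ t).OrdConnected := by
  constructor
  rintro x hx y hy z hz
  rcases hx with hx | hx <;> rcases hy with hy | hy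
  · exact Or.inl (hs.out hx hy hz)
  · rcases le_total z c with h1 | h1
    · exact Or.inl (hs.out hx hcs ⟨hz.1, h1⟩)
    · exact Or.inr (ht.out hct hy ⟨h1, hz.2⟩)
  · rcases le_total z c with h1 | h1
    · exact Or.inr (ht.out hx hct ⟨hz.1, h1⟩)
    · exact Or.inl (hs.out hcs hy ⟨h1, hz.2⟩)
  · exact Or.inr (ht.out hx hy hz)

theorem totalLength_app (H₁ H₂ : Heap) :
    (H₁.app H₂).totalLength = H₁.totalLength + H₂.totalLength := by
  induction H₁ using Quot.ind with
  | mk L₁ =>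
    induction H₂ using Quot.ind with
    | mk L₂ => exact totalLength_append L₁ L₂

theorem heq_totalLength {L L' : List Polymer} (h : heq L L') :
    Heap.totalLength (Quot.mk HeapStep L) = Heap.totalLength (Quot.mk HeapStep L') :=
  congrArg Heap.totalLength h
/-! ### The structure lemma for composed words -/

theorem Reach.mono {M M' : Multiset Polymer} (h : ∀ p : Polymer, p ∈ M → p ∈ M')
    {a b : Polymer} (hr : Reach M a b) : Reach M' a b := by
  induction hr with
  | refl => exact Relation.ReflTransGen.refl
  | tail _ hlink ih => exact ih.tail ⟨h _ hlink.1, h _ hlink.2.1, hlink.2.2⟩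

theorem prefix_decomp {X Y u v : List Polymer} {b : Polymer}
    (h : X ++ Y = u ++ b :: v) (hb : b ∉ X) : ∃ u', u = X ++ u' ∧ Y = u' ++ b :: v := by
  induction X generalizing u with
  | nil => exact ⟨u, by simpa using h.symm ▸ rfl, by simpa using h⟩
  | cons x X' ih =>
      cases u with
      | nil =>
          exfalso
          rw [List.nil_append] at h
          rw [List.cons_append] at h
          have : x = b := ((List.cons.injEq _ _ _ _).mp h).1
          exact hb (this ▸ List.mem_cons_self)
      | cons z u' =>
          rw [List.cons_append, List.cons_append] at h
          obtain ⟨hxz, h'⟩ := (List.cons.injEq _ _ _ _).mp h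
          obtain ⟨u'', hu1, hu2⟩ := ih h' (fun hh => hb (List.mem_cons_of_mem _ hh))
          exact ⟨u'', by rw [hu1, hxz, List.cons_append], hu2⟩

/-- Data of a composed word. -/
structure Comp where
  c1 : List Polymer
  hl : List Polymer
  pl : List Polymer
  alf : Polymer
  rr : ℤ
  h1 : c1 ≠ []
  hc1 : ∀ x ∈ c1, x.right ≤ rr
  hrr : ∃ x ∈ c1, x.right = rr
  hhl : ∀ x ∈ hl, rr < x.left ∧ x.right < alf.left
  hra : rr < alf.left
  hpl : (split {alf} pl).2 = []
  hpyr : Heap.IsPyramid (Quot.mk HeapStep (alf :: pl))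
  hconn1 : (Heap.space (Quot.mk HeapStep c1)).OrdConnected

namespace Comp

variable (D : Comp)

/-- The composed word. -/
def word : List Polymer := D.c1 ++ D.hl ++ D.alf :: D.pl

theorem hc1a : ∀ x ∈ D.c1, x.right < D.alf.left := by
  intro x hx
  have := D.hc1 x hx
  have := D.hra
  omega

theorem nonconc_pre : ∀ x ∈ D.c1 ++ D.hl, ¬ x.Concurrent D.alf := by
  intro x hx hc
  have h1 : D.alf.left ≤ x.right := hc.2
  rcases List.mem_append.mp hx with hx | hx
  · have := D.hc1a x hx; omega
  · have := (D.hhl x hx).2; omega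

theorem nonconc_pre' : ∀ x ∈ D.c1 ++ D.hl, ¬ D.alf.Concurrent x := by
  intro x hx hc
  exact D.nonconc_pre x hx hc.symm

/-- C1: the composed word is `alf` times the rest. -/
theorem word_heq : heq D.word (D.alf :: (D.c1 ++ D.hl ++ D.pl)) := by
  have h := heq.pull_front (x := D.alf) (u := D.c1 ++ D.hl) D.nonconc_pre D.pl
  have e1 : D.word = (D.c1 ++ D.hl) ++ D.alf :: D.pl := by
    rw [word, List.append_assoc]
  have e2 : D.c1 ++ D.hl ++ D.pl = (D.c1 ++ D.hl) ++ D.pl := by rw [List.append_assoc]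
  rw [e1]
  exact h

/-- C2: the scan recovers the parts. -/
theorem split_word : split {D.alf} (D.c1 ++ D.hl ++ D.pl) = (D.pl, D.c1 ++ D.hl) := by
  have h1 : ∀ x ∈ D.c1 ++ D.hl, ∀ c ∈ ({D.alf} : Set Polymer), ¬ c.Concurrent x := by
    intro x hx c hc
    rw [Set.mem_singleton_iff] at hc
    subst hc
    exact D.nonconc_pre' x hx
  have h2 := split_append_of_not_concurrent h1 D.pl
  rw [h2, split_fst_eq_of_snd_nil D.hpl, D.hpl]
  simp

theorem mem_word_iff {b : Polymer} :
    b ∈ D.word ↔ b ∈ D.c1 ∨ b ∈ D.hl ∨ b = D.alf ∨ b ∈ D.pl := by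
  rw [word]
  simp [List.mem_append, or_assoc]

theorem alf_minimal : Heap.IsMinimal (Quot.mk HeapStep D.word) D.alf := by
  rw [isMinimal_iff]
  exact ⟨D.c1 ++ D.hl, D.pl, by rw [word, List.append_assoc], D.nonconc_pre⟩

/-- C3: `alf` is the rightmost minimal polymer of the composed word. -/
theorem alf_rightmost :
    ∀ b, Heap.IsMinimal (Quot.mk HeapStep D.word) b → b.left ≤ D.alf.left := by
  intro b hb
  have hbmem : b ∈ D.word := by
    have := isMinimal_mem hb
    simpa [Heap.toMultiset] using this
  by_cases hbc1 : b ∈ D.c1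
  · have h1 := D.hc1a b hbc1
    have := b.left_lt_right
    omega
  by_cases hbhl : b ∈ D.hl
  · have h1 := (D.hhl b hbhl).2
    have := b.left_lt_right
    omega
  by_cases hba : b = D.alf
  · rw [hba]
  -- b occurs only in pl
  rw [isMinimal_iff] at hb
  obtain ⟨u, v, huv, hu⟩ := hb
  have hword : (D.c1 ++ D.hl ++ [D.alf]) ++ D.pl = u ++ b :: v := by
    rw [← huv, word]
    simp
  have hbX : b ∉ D.c1 ++ D.hl ++ [D.alf] := by
    intro hmem
    rcases List.mem_append.mp hmem with hmem | hmem
    · rcases List.mem_append.mp hmem with h | h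
      · exact hbc1 h
      · exact hbhl h
    · exact hba (by simpa using hmem)
  obtain ⟨u', hu1, hu2⟩ := prefix_decomp hword hbX
  -- b is minimal in the pyramid, hence equals alf: contradiction with hba? No: conclude.
  have hbminP : Heap.IsMinimal (Quot.mk HeapStep (D.alf :: D.pl)) b := by
    rw [isMinimal_iff]
    refine ⟨D.alf :: u', v, by rw [hu2]; rfl, ?_⟩
    intro y hy
    apply hu
    rw [hu1]
    rcases List.mem_cons.mp hy with rfl | hy'
    · exact List.mem_append.mpr (Or.inl (by simp))
    · exact List.mem_append.mpr (Or.inr hy')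
  obtain ⟨a, hamin, huniq⟩ := D.hpyr
  have h1 : b = a := huniq b hbminP
  have h2 : D.alf = a := huniq D.alf ⟨D.pl, rfl⟩
  rw [h1, ← h2]

/-- C5a: a leftmost element of the combined multiset lies in `c1`. -/
theorem min_mem_c1 {m : Polymer} (hm : m ∈ D.c1 ++ D.hl)
    (hmin : ∀ p ∈ (↑(D.c1 ++ D.hl) : Multiset Polymer), m.left ≤ p.left) :
    m ∈ D.c1 := by
  rcases List.mem_append.mp hm with h | h
  · exact h
  · exfalso
    obtain ⟨x, hx⟩ := List.exists_mem_of_ne_nil _ D.h1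
    have h1 := hmin x (by rw [Multiset.mem_coe]; exact List.mem_append.mpr (Or.inl hx))
    have h2 := (D.hhl m h).1
    have h3 := D.hc1 x hx
    have := x.left_lt_right
    omega

/-- C5b: everything in `c1` is reachable from a leftmost element. -/
theorem c1_reach {m : Polymer} (hm : m ∈ D.c1)
    (hmin : ∀ p ∈ (↑(D.c1 ++ D.hl) : Multiset Polymer), m.left ≤ p.left) :
    ∀ x ∈ D.c1, Reach (↑(D.c1 ++ D.hl) : Multiset Polymer) m x := by
  intro x hx
  have h1 : ∀ y ∈ (↑D.c1 : Multiset Polymer), Reach (↑D.c1 : Multiset Polymer) m y := by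
    apply all_reach_of_ordConnected (by rwa [Multiset.mem_coe])
    · intro p hp
      exact hmin p (by rw [Multiset.mem_coe] at hp ⊢; exact List.mem_append.mpr (Or.inl hp))
    · exact D.hconn1
  have h2 := h1 x (by rwa [Multiset.mem_coe])
  exact h2.mono (fun p hp => by
    rw [Multiset.mem_coe] at hp ⊢
    exact List.mem_append.mpr (Or.inl hp))

/-- C5c: reachable elements stay in `c1`. -/
theorem reach_mem_c1 {m : Polymer} (hm : m ∈ D.c1) :
    ∀ y, Reach (↑(D.c1 ++ D.hl) : Multiset Polymer) m y → y ∈ D.c1 := by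
  intro y hy
  induction hy with
  | refl => exact hm
  | tail _ hlink ih =>
      obtain ⟨_, hyM, hconc⟩ := hlink
      rw [Multiset.mem_coe, List.mem_append] at hyM
      rcases hyM with h | h
      · exact h
      · exfalso
        have h1 := (D.hhl _ h).1
        have h2 := D.hc1 _ ih
        have h3 : _ ≤ _ := hconc.2
        omega

theorem hl_not_mem_c1 {y : Polymer} (hy : y ∈ D.hl) : y ∉ D.c1 := by
  intro hc
  have h1 := (D.hhl y hy).1
  have h2 := D.hc1 y hc
  have := y.left_lt_right
  omega

/-- C5: the reachability filter recovers `c1` and `hl`. -/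
theorem filter_eq {m : Polymer} (hm : m ∈ D.c1)
    (hmin : ∀ p ∈ (↑(D.c1 ++ D.hl) : Multiset Polymer), m.left ≤ p.left) :
    filterP (fun x => Reach (↑(D.c1 ++ D.hl) : Multiset Polymer) m x) (D.c1 ++ D.hl) = D.c1 ∧
    filterP (fun x => ¬ Reach (↑(D.c1 ++ D.hl) : Multiset Polymer) m x) (D.c1 ++ D.hl)
      = D.hl := by
  constructor
  · rw [filterP_append, filterP_eq_self (D.c1_reach hm hmin),
      filterP_eq_nil (fun y hy hr => D.hl_not_mem_c1 hy (D.reach_mem_c1 hm y hr))]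
    simp
  · rw [filterP_append, filterP_eq_nil (fun y hy hr => hr (D.c1_reach hm hmin y hy)),
      filterP_eq_self (fun y hy => fun hr => D.hl_not_mem_c1 hy (D.reach_mem_c1 hm y hr))]
    simp

/-- C6/C7: the composed word is not a pyramid. -/
theorem not_pyramid : ¬ Heap.IsPyramid (Quot.mk HeapStep D.word) := by
  intro hp
  obtain ⟨x, rest, hc1⟩ := List.exists_cons_of_ne_nil D.h1
  have hxmin : Heap.IsMinimal (Quot.mk HeapStep D.word) x := by
    rw [isMinimal_iff]
    exact ⟨[], rest ++ D.hl ++ D.alf :: D.pl, by rw [word, hc1]; simp, by simp⟩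
  obtain ⟨a, _, huniq⟩ := hp
  have h1 := huniq x hxmin
  have h2 := huniq D.alf D.alf_minimal
  have hxa : x = D.alf := h1.trans h2.symm
  have hxc1 : x ∈ D.c1 := by rw [hc1]; exact List.mem_cons_self
  have h3 := D.hc1a x hxc1
  rw [hxa] at h3
  have h4 := D.alf.left_lt_right
  omega

/-- C8: the space of the composed word is order-connected, provided the pyramid
reaches down to the `c1` block. -/
theorem word_space_ordConnected (hmu : ∃ p ∈ D.alf :: D.pl, p.left ≤ D.rr) :
    (Heap.space (Quot.mk HeapStep D.word)).OrdConnected := by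
  have hsp1 : Heap.space (Quot.mk HeapStep D.word) =
      (Heap.space (Quot.mk HeapStep D.c1) ∪ Heap.space (Quot.mk HeapStep D.hl)) ∪
        Heap.space (Quot.mk HeapStep (D.alf :: D.pl)) := by
    rw [word, ← space_append, ← space_append]
  have hSP : (Heap.space (Quot.mk HeapStep (D.alf :: D.pl))).OrdConnected :=
    pyramid_space_ordConnected D.hpyr
  obtain ⟨p, hpmem, hpl⟩ := hmu
  have hpin : (p.left : ℝ) ∈ Heap.space (Quot.mk HeapStep (D.alf :: D.pl)) := by
    erw [mem_space_iff]
    exact ⟨p, by simpa [Heap.toMultiset] using hpmem,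
      le_refl _, by exact_mod_cast le_of_lt p.left_lt_right⟩
  have hain : (D.alf.left : ℝ) ∈ Heap.space (Quot.mk HeapStep (D.alf :: D.pl)) := by
    erw [mem_space_iff]
    exact ⟨D.alf, by simp [Heap.toMultiset],
      le_refl _, by exact_mod_cast le_of_lt D.alf.left_lt_right⟩
  have hIcc : Set.Icc ((p.left : ℝ)) ((D.alf.left : ℝ)) ⊆
      Heap.space (Quot.mk HeapStep (D.alf :: D.pl)) := hSP.out hpin hain
  have hrrSP : ((D.rr : ℝ)) ∈ Heap.space (Quot.mk HeapStep (D.alf :: D.pl)) := by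
    apply hIcc
    constructor
    · exact_mod_cast hpl
    · exact_mod_cast le_of_lt D.hra
  obtain ⟨x₀, hx₀, hx₀r⟩ := D.hrr
  have hrrS1 : ((D.rr : ℝ)) ∈ Heap.space (Quot.mk HeapStep D.c1) := by
    erw [mem_space_iff]
    refine ⟨x₀, by simpa [Heap.toMultiset] using hx₀, ?_, by rw [hx₀r]⟩
    rw [← hx₀r]
    exact_mod_cast le_of_lt x₀.left_lt_right
  have hSH : Heap.space (Quot.mk HeapStep D.hl) ⊆
      Heap.space (Quot.mk HeapStep (D.alf :: D.pl)) := by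
    intro z hz
    erw [mem_space_iff] at hz
    obtain ⟨y, hy, hy1, hy2⟩ := hz
    have hyl : y ∈ D.hl := by simpa [Heap.toMultiset] using hy
    obtain ⟨h1, h2⟩ := D.hhl y hyl
    apply hIcc
    constructor
    · have : (p.left : ℝ) ≤ (y.left : ℝ) := by exact_mod_cast (by omega : p.left ≤ y.left)
      linarith
    · have : (y.right : ℝ) ≤ (D.alf.left : ℝ) := by exact_mod_cast (by omega : y.right ≤ D.alf.left)
      linarith
  rw [hsp1, Set.union_assoc, Set.union_eq_self_of_subset_left hSH]
  exact ordConnected_union D.hconn1 hSP hrrS1 hrrSP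

theorem word_multiset :
    (↑D.word : Multiset Polymer) =
      (↑D.c1 : Multiset Polymer) + (↑D.hl : Multiset Polymer) +
        (D.alf ::ₘ (↑D.pl : Multiset Polymer)) := by
  rw [word]
  simp

end Comp
/-! ### The forward and backward maps -/

instance : Inhabited Polymer := ⟨⟨(0, 1), by norm_num⟩⟩

/-- The rightmost minimal polymer of a heap. -/
def theAlpha (C : Heap) : Polymer :=
  if h : C.toMultiset ≠ 0 then Classical.choose (exists_rightmost_minimal C h) else default

theorem theAlpha_spec {C : Heap} (h : C.toMultiset ≠ 0) :
    C.IsMinimal (theAlpha C) ∧ ∀ b, C.IsMinimal b → b.left ≤ (theAlpha C).left := by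
  rw [theAlpha, dif_pos h]
  exact Classical.choose_spec (exists_rightmost_minimal C h)

theorem theAlpha_eq {C : Heap} (h : C.toMultiset ≠ 0) {a : Polymer}
    (ha : C.IsMinimal a ∧ ∀ b, C.IsMinimal b → b.left ≤ a.left) : theAlpha C = a :=
  rightmost_minimal_unique (theAlpha_spec h) ha

/-- A chosen word witnessing minimality of `theAlpha`. -/
def theT (C : Heap) : List Polymer :=
  if h : C.IsMinimal (theAlpha C) then Classical.choose h else []

theorem theT_spec {C : Heap} (h : C.IsMinimal (theAlpha C)) :
    C = Quot.mk HeapStep (theAlpha C :: theT C) := by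
  rw [theT, dif_pos h]
  exact Classical.choose_spec h

/-- A leftmost polymer of a multiset. -/
def theMin (s : Multiset Polymer) : Polymer :=
  if h : s ≠ 0 then Classical.choose (Multiset.exists_min_image_pol s Polymer.left h) else default

theorem theMin_spec {s : Multiset Polymer} (h : s ≠ 0) :
    theMin s ∈ s ∧ ∀ p ∈ s, (theMin s).left ≤ p.left := by
  rw [theMin, dif_pos h]
  exact Classical.choose_spec (Multiset.exists_min_image_pol s Polymer.left h)

/-- The forward (Nordic decomposition) map. -/
def fwdParts (C : Heap) : Heap × ℕ × Heap × Heap :=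
  let α := theAlpha C
  let T := theT C
  let PL := (split {α} T).1
  let CL := (split {α} T).2
  let M : Multiset Polymer := (↑CL : Multiset Polymer)
  let m := theMin M
  let c1 := filterP (fun x => Reach M m x) CL
  let hl := filterP (fun x => ¬ Reach M m x) CL
  let rr := mxR (↑c1 : Multiset Polymer)
  (Heap.tr (-m.left) (Quot.mk HeapStep c1),
   (α.left - (rr + 1)).toNat,
   Heap.tr (-(rr + 1)) (Quot.mk HeapStep hl),
   Heap.tr (-α.left) (Quot.mk HeapStep (α :: PL)))

/-- The backward (composition) map. -/
def bwd0 (q : Heap × ℕ × Heap × Heap) : Heap :=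
  let r1 := mxR q.1.toMultiset
  let A := (q.1.tr (-(r1 + 1))).app ((q.2.2.1).app ((q.2.2.2).tr (q.2.1 : ℤ)))
  A.tr (-(mnL A.toMultiset))

theorem Heap.app_toMultiset (H₁ H₂ : Heap) :
    (H₁.app H₂).toMultiset = H₁.toMultiset + H₂.toMultiset := by
  induction H₁ using Quot.ind with
  | mk L₁ =>
    induction H₂ using Quot.ind with
    | mk L₂ => simp [Heap.toMultiset]

theorem bwd0_totalLength (q : Heap × ℕ × Heap × Heap) :
    (bwd0 q).totalLength =
      q.1.totalLength + q.2.2.1.totalLength + q.2.2.2.totalLength := by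
  rw [bwd0]
  simp only [Heap.tr_totalLength]
  rw [totalLength_app, totalLength_app, Heap.tr_totalLength, Heap.tr_totalLength]
  ring
/-! ### Analysis of the forward map -/

theorem coe_ne_zero_iff {L : List Polymer} : (↑L : Multiset Polymer) ≠ 0 ↔ L ≠ [] := by
  constructor
  · intro h hL; subst hL; simp at h
  · intro h h0; exact h (by simpa using h0)

theorem fwd_setup (C : Heap) (hconn : C.IsConnected) (hnp : ¬ C.IsPyramid)
    (hnorm : C.Normalized) :
    ∃ D : Comp,
      C = Quot.mk HeapStep D.word ∧
      D.alf = theAlpha C ∧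
      (∃ p ∈ D.alf :: D.pl, p.left ≤ D.rr) ∧
      fwdParts C = (Heap.tr (-(mnL (↑D.c1 : Multiset Polymer))) (Quot.mk HeapStep D.c1),
        (D.alf.left - (D.rr + 1)).toNat,
        Heap.tr (-(D.rr + 1)) (Quot.mk HeapStep D.hl),
        Heap.tr (-(D.alf.left)) (Quot.mk HeapStep (D.alf :: D.pl))) := by
  have hne : C.toMultiset ≠ 0 := hconn.1
  set α := theAlpha C with hα
  obtain ⟨hα1, hα2⟩ := theAlpha_spec hne
  have hT := theT_spec hα1
  set T := theT C with hTdef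
  set PL := (split ({α} : Set Polymer) T).1 with hPL
  set CL := (split ({α} : Set Polymer) T).2 with hCL
  have hshuf : heq T (CL ++ PL) := split_shuffle _ T
  have hCLα : ∀ x ∈ CL, ¬ α.Concurrent x := by
    intro x hx
    exact split_snd_not_concurrent x hx α rfl
  have hword : heq (α :: T) (CL ++ α :: PL) := by
    have h1 : heq (α :: T) (α :: (CL ++ PL)) := hshuf.cons α
    exact h1.trans (heq.push_back (fun y hy hc => hCLα y hy hc.symm) PL)
  have hCeq : C = Quot.mk HeapStep (CL ++ α :: PL) := hT.trans hword
  -- CL is nonempty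
  have hCLne : CL ≠ [] := by
    intro h0
    apply hnp
    have hC2 : C = Quot.mk HeapStep (α :: PL) := by
      rw [hCeq, h0, List.nil_append]
    refine ⟨α, ⟨PL, hC2⟩, ?_⟩
    intro b hb
    rw [hC2] at hb
    exact pyramid_of_split rfl b hb
  have hMne : (↑CL : Multiset Polymer) ≠ 0 := coe_ne_zero_iff.mpr hCLne
  set M : Multiset Polymer := (↑CL : Multiset Polymer) with hM
  obtain ⟨hmM, hmmin⟩ := theMin_spec hMne
  set m := theMin M with hmdef
  set c1 := filterP (fun x => Reach M m x) CL with hc1def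
  set hl := filterP (fun x => ¬ Reach M m x) CL with hhldef
  have hmc1 : m ∈ c1 := mem_filterP.mpr ⟨Multiset.mem_coe.mp hmM, Relation.ReflTransGen.refl⟩
  have hc1ne : c1 ≠ [] := fun h0 => by rw [h0] at hmc1; exact List.not_mem_nil (a := m) hmc1
  have hc1M : (↑c1 : Multiset Polymer) ≠ 0 := coe_ne_zero_iff.mpr hc1ne
  obtain ⟨hrrle, x₀, hx₀c1, hx₀r⟩ := mxR_spec hc1M
  set rr := mxR (↑c1 : Multiset Polymer) with hrrdef
  rw [Multiset.mem_coe] at hx₀c1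
  have hpart : heq CL (c1 ++ hl) := by
    apply partition_shuffle
    intro x hx y hy hPx hPy hc
    exact hPy (hPx.tail ⟨Multiset.mem_coe.mpr hx, Multiset.mem_coe.mpr hy, hc⟩)
  -- membership facts
  have hc1sub : ∀ x ∈ c1, x ∈ CL ∧ Reach M m x := fun x hx => mem_filterP.mp hx
  have hhlsub : ∀ x ∈ hl, x ∈ CL ∧ ¬ Reach M m x := fun x hx => mem_filterP.mp hx
  -- all CL elements are strictly left of α
  have hCLleft : ∀ x ∈ CL, x.right < α.left := by
    intro x hx
    by_contra hcon
    push_neg at hcon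
    have hnc := hCLα x hx
    have hxα : α.right < x.left := by
      have := α.left_lt_right
      rcases Polymer.not_concurrent_iff.mp (fun hc => hnc hc.symm) with h | h
      · omega
      · omega
    -- the class of x
    set P2 : Polymer → Prop := fun z => ¬ Reach M x z with hP2
    have hcross : ∀ z ∈ CL, ∀ y ∈ CL, P2 z → ¬ P2 y → ¬ z.Concurrent y := by
      intro z hz y hy hPz hPy hc
      exact hPz ((not_not.mp hPy).tail
        ⟨Multiset.mem_coe.mpr hy, Multiset.mem_coe.mpr hz, hc.symm⟩)
    have hpart2 : heq CL (filterP P2 CL ++ filterP (fun z => ¬ P2 z) CL) :=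
      partition_shuffle hcross
    set cls := filterP (fun z => ¬ P2 z) CL with hclsdef
    set ncl := filterP P2 CL with hncldef
    have hxcls : x ∈ cls := mem_filterP.mpr ⟨hx, not_not.mpr Relation.ReflTransGen.refl⟩
    have hclsne : cls ≠ [] := fun h0 => by rw [h0] at hxcls; exact List.not_mem_nil (a := x) hxcls
    obtain ⟨f, cltail, hcls⟩ := List.exists_cons_of_ne_nil hclsne
    have hfcls : f ∈ cls := by rw [hcls]; exact List.mem_cons_self
    obtain ⟨hfCL, hfreach'⟩ := mem_filterP.mp hfcls
    have hfreach : Reach M x f := not_not.mp hfreach'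
    -- f is minimal in C
    have hCrep : C = Quot.mk HeapStep ((ncl ++ cls) ++ α :: PL) := by
      rw [hCeq]
      exact hpart2.append_right (α :: PL)
    have hfmin : C.IsMinimal f := by
      rw [hCrep, isMinimal_iff]
      refine ⟨ncl, cltail ++ α :: PL, by rw [hcls]; simp, ?_⟩
      intro y hy hc
      obtain ⟨hyCL, hyP2⟩ := mem_filterP.mp hy
      exact hyP2 (hfreach.tail ⟨Multiset.mem_coe.mpr hfCL,
        Multiset.mem_coe.mpr hyCL, hc.symm⟩)
    have hfα : f.left ≤ α.left := hα2 f hfmin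
    have hfnc := hCLα f hfCL
    have hfleft : f.right < α.left := by
      have := α.left_lt_right
      rcases Polymer.not_concurrent_iff.mp (fun hc => hfnc hc.symm) with h | h
      · omega
      · omega
    -- α.left is in the class space of f, contradiction
    have hxf : Reach M f x := Reach.symm' hfreach
    have hU := reach_class_ordConnected M f (Multiset.mem_coe.mpr hfCL)
    have hp1 : ((f.right : ℝ)) ∈ (⋃ p ∈ {p : Polymer | p ∈ M ∧ Reach M f p},
        Set.Icc (p.left : ℝ) (p.right : ℝ)) := by
      simp only [Set.mem_iUnion, Set.mem_Icc]
      exact ⟨f, ⟨Multiset.mem_coe.mpr hfCL, Relation.ReflTransGen.refl⟩,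
        by exact_mod_cast le_of_lt f.left_lt_right, le_refl _⟩
    have hp2 : ((x.left : ℝ)) ∈ (⋃ p ∈ {p : Polymer | p ∈ M ∧ Reach M f p},
        Set.Icc (p.left : ℝ) (p.right : ℝ)) := by
      simp only [Set.mem_iUnion, Set.mem_Icc]
      exact ⟨x, ⟨Multiset.mem_coe.mpr hx, hxf⟩,
        le_refl _, by exact_mod_cast le_of_lt x.left_lt_right⟩
    have hmid := hU.out hp1 hp2 (⟨by exact_mod_cast le_of_lt hfleft,
      by exact_mod_cast (by have := α.left_lt_right; omega : α.left ≤ x.left)⟩ :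
      ((α.left : ℝ)) ∈ Set.Icc _ _)
    simp only [Set.mem_iUnion, Set.mem_Icc] at hmid
    obtain ⟨c, ⟨hcM, _⟩, hcl, hcr⟩ := hmid
    refine hCLα c (by rwa [Multiset.mem_coe] at hcM) ⟨?_, ?_⟩
    · exact_mod_cast hcr
    · have : (c.left : ℝ) ≤ (α.right : ℝ) := by
        have := α.left_lt_right
        have h2 : (α.left : ℝ) ≤ (α.right : ℝ) := by exact_mod_cast le_of_lt this
        linarith
      exact_mod_cast this
  -- build the Comp structure
  have hhl2 : ∀ x ∈ hl, rr < x.left ∧ x.right < α.left := by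
    intro y hy
    obtain ⟨hyCL, hyr⟩ := hhlsub y hy
    constructor
    · rw [← hx₀r]
      refine not_reach_right (M := M) (m := m) hmM hmmin
        ⟨Multiset.mem_coe.mpr (hc1sub x₀ hx₀c1).1, (hc1sub x₀ hx₀c1).2⟩
        ?_ (Multiset.mem_coe.mpr hyCL) hyr
      intro p hp hpr
      have hpc1 : p ∈ c1 := mem_filterP.mpr ⟨Multiset.mem_coe.mp hp, hpr⟩
      rw [hx₀r]
      exact hrrle p (Multiset.mem_coe.mpr hpc1)
    · exact hCLleft y hyCL
  have hra : rr < α.left := by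
    rw [← hx₀r]
    exact hCLleft x₀ (hc1sub x₀ hx₀c1).1
  have hconn1 : (Heap.space (Quot.mk HeapStep c1)).OrdConnected := by
    have hsp : Heap.space (Quot.mk HeapStep c1) =
        (⋃ p ∈ {p : Polymer | p ∈ M ∧ Reach M m p},
          Set.Icc (p.left : ℝ) (p.right : ℝ)) := by
      apply Set.ext
      intro z
      erw [mem_space_iff]
      simp only [Set.mem_iUnion, Set.mem_Icc]
      constructor
      · rintro ⟨p, hp, h1, h2⟩
        have hp' : p ∈ c1 := by
          simpa [Heap.toMultiset] using hp
        obtain ⟨hpCL, hpr⟩ := hc1sub p hp'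
        exact ⟨p, ⟨Multiset.mem_coe.mpr hpCL, hpr⟩, h1, h2⟩
      · rintro ⟨p, ⟨hpM, hpr⟩, h1, h2⟩
        refine ⟨p, ?_, h1, h2⟩
        have : p ∈ c1 := mem_filterP.mpr ⟨Multiset.mem_coe.mp hpM, hpr⟩
        simpa [Heap.toMultiset] using this
    rw [hsp]
    exact reach_class_ordConnected M m hmM
  refine ⟨⟨c1, hl, PL, α, rr, hc1ne,
    (fun x hx => hrrle x (Multiset.mem_coe.mpr hx)),
    ⟨x₀, Multiset.mem_coe.mpr hx₀c1, hx₀r⟩, hhl2, hra, split_idem _ T,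
    ⟨α, ⟨PL, rfl⟩, fun b hb => pyramid_of_split rfl b hb⟩, hconn1⟩, ?_, rfl, ?_, ?_⟩
  · show C = Quot.mk HeapStep (c1 ++ hl ++ α :: PL)
    rw [hCeq]
    exact hpart.append_right (α :: PL)
  · -- ∃ p ∈ α :: PL, p.left ≤ rr : covering argument using connectedness of C
    show ∃ p ∈ α :: PL, p.left ≤ rr
    have hCspace : C.space = Heap.space (Quot.mk HeapStep (CL ++ α :: PL)) := by
      rw [← hCeq]
    have hp1 : ((rr : ℝ)) ∈ C.space := by
      erw [hCspace, mem_space_iff]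
      refine ⟨x₀, ?_, ?_, by rw [hx₀r]⟩
      · have hx₀CL : x₀ ∈ CL := (hc1sub x₀ hx₀c1).1
        simp only [Heap.toMultiset, Multiset.mem_coe, List.mem_append, List.mem_cons]
        exact Or.inl hx₀CL
      · rw [← hx₀r]; exact_mod_cast le_of_lt x₀.left_lt_right
    have hp2 : ((α.left : ℝ)) ∈ C.space := by
      erw [hCspace, mem_space_iff]
      refine ⟨α, ?_, le_refl _, by exact_mod_cast le_of_lt α.left_lt_right⟩
      simp [Heap.toMultiset]
    have hcast : (rr : ℝ) + 1 ≤ (α.left : ℝ) := by exact_mod_cast hra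
    have hmid := hconn.2.out hp1 hp2
      (⟨by linarith, by linarith⟩ : ((rr : ℝ) + 1/2) ∈ Set.Icc _ _)
    erw [hCspace, mem_space_iff] at hmid
    obtain ⟨q, hq, hq1, hq2⟩ := hmid
    have hqmem : q ∈ CL ++ α :: PL := by
      rw [show Heap.toMultiset (Quot.mk HeapStep (CL ++ α :: PL)) =
        ((CL ++ α :: PL : List Polymer) : Multiset Polymer) from rfl, Multiset.mem_coe] at hq
      exact hq
    have hql : q.left ≤ rr := by
      by_contra hh
      push_neg at hh
      have : (rr : ℝ) + 1 ≤ (q.left : ℝ) := by exact_mod_cast hh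
      linarith
    have hqr : rr + 1 ≤ q.right := by
      by_contra hh
      push_neg at hh
      have : (q.right : ℝ) ≤ (rr : ℝ) := by exact_mod_cast (by omega : q.right ≤ rr)
      linarith
    rcases List.mem_append.mp hqmem with hqCL | hqP
    · exfalso
      have := hCLleft q hqCL
      -- q ∈ CL: either in c1 (right ≤ rr) or in hl (left > rr)
      by_cases hqre : Reach M m q
      · have : q ∈ c1 := mem_filterP.mpr ⟨hqCL, hqre⟩
        have := hrrle q (Multiset.mem_coe.mpr this)
        omega
      · have : q ∈ hl := mem_filterP.mpr ⟨hqCL, hqre⟩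
        have := (hhl2 q this).1
        omega
    · exact ⟨q, hqP, hql⟩
  · -- the components of fwdParts
    have hm0 : (theMin M).left = mnL (↑c1 : Multiset Polymer) := by
      refine (mnL_unique hc1M ?_ ?_).symm
      · intro p hp
        rw [Multiset.mem_coe] at hp
        exact hmmin p (Multiset.mem_coe.mpr (hc1sub p hp).1)
      · exact ⟨m, Multiset.mem_coe.mpr hmc1, rfl⟩
    have hfw : fwdParts C = (Heap.tr (-(theMin M).left) (Quot.mk HeapStep c1),
        (α.left - (rr + 1)).toNat,
        Heap.tr (-(rr + 1)) (Quot.mk HeapStep hl),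
        Heap.tr (-α.left) (Quot.mk HeapStep (α :: PL))) := rfl
    rw [hfw, hm0]
/-! ### Forward map: NordicQuad and round trip 1 -/

theorem mxR_tr (t : ℤ) {s : Multiset Polymer} (h : s ≠ 0) :
    mxR (s.map (Polymer.tr t)) = mxR s + t := by
  obtain ⟨hle, p, hp, hpr⟩ := mxR_spec h
  refine mxR_unique (by simpa [Multiset.map_eq_zero] using h) ?_ ?_
  · rintro q hq
    obtain ⟨y, hy, rfl⟩ := Multiset.mem_map.mp hq
    have := hle y hy
    simp only [Polymer.tr_right]
    omega
  · exact ⟨p.tr t, Multiset.mem_map_of_mem _ hp, by simp [hpr]⟩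

theorem mnL_tr (t : ℤ) {s : Multiset Polymer} (h : s ≠ 0) :
    mnL (s.map (Polymer.tr t)) = mnL s + t := by
  obtain ⟨hle, p, hp, hpl⟩ := mnL_spec h
  refine mnL_unique (by simpa [Multiset.map_eq_zero] using h) ?_ ?_
  · rintro q hq
    obtain ⟨y, hy, rfl⟩ := Multiset.mem_map.mp hq
    have := hle y hy
    simp only [Polymer.tr_left]
    omega
  · exact ⟨p.tr t, Multiset.mem_map_of_mem _ hp, by simp [hpl]⟩

theorem fwd_quad (C : Heap) (hconn : C.IsConnected) (hnp : ¬ C.IsPyramid)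
    (hnorm : C.Normalized) : NordicQuad (fwdParts C) := by
  obtain ⟨D, hCeq, hAeq, hμ, hfw⟩ := fwd_setup C hconn hnp hnorm
  rw [hfw, NordicQuad]
  simp only
  have hc1ne : (↑D.c1 : Multiset Polymer) ≠ 0 := coe_ne_zero_iff.mpr D.h1
  obtain ⟨hmnle, m₀, hm₀, hm₀l⟩ := mnL_spec hc1ne
  have hplne : (↑(D.alf :: D.pl) : Multiset Polymer) ≠ 0 := by
    simp
  obtain ⟨hμle, p₀, hp₀, hp₀l⟩ := mnL_spec hplne
  obtain ⟨pw, hpw, hpwr⟩ := hμ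
  have hμrr : mnL (↑(D.alf :: D.pl) : Multiset Polymer) ≤ D.rr :=
    le_trans (hμle pw (Multiset.mem_coe.mpr hpw)) hpwr
  have hμa : mnL (↑(D.alf :: D.pl) : Multiset Polymer) ≤ D.alf.left :=
    hμle D.alf (by simp)
  have hra := D.hra
  refine ⟨⟨?_, ?_⟩, ⟨?_, ?_⟩, ?_, ?_, ?_, ?_⟩
  · -- C₁ nonempty
    show Heap.toMultiset _ ≠ 0
    erw [Heap.tr_toMultiset]
    simpa [Multiset.map_eq_zero, Heap.toMultiset] using hc1ne
  · -- C₁ space OrdConnected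
    exact ordConnected_space_tr _ D.hconn1
  · -- C₁ normalized: lower bound
    intro p hp
    erw [Heap.tr_toMultiset] at hp
    obtain ⟨y, hy, rfl⟩ := Multiset.mem_map.mp hp
    have : y ∈ (↑D.c1 : Multiset Polymer) := by simpa [Heap.toMultiset] using hy
    have := hmnle y this
    simp only [Polymer.tr_left]
    omega
  · -- C₁ normalized: witness
    refine ⟨m₀.tr (-(mnL (↑D.c1 : Multiset Polymer))), ?_, by simp [hm₀l]⟩
    erw [Heap.tr_toMultiset]
    refine Multiset.mem_map_of_mem _ ?_
    simpa [Heap.toMultiset] using hm₀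
  · -- H condition
    intro p hp
    erw [Heap.tr_toMultiset] at hp
    obtain ⟨y, hy, rfl⟩ := Multiset.mem_map.mp hp
    have hyhl : y ∈ D.hl := by simpa [Heap.toMultiset] using hy
    obtain ⟨h1, h2⟩ := D.hhl y hyhl
    constructor
    · simp only [Polymer.tr_left]; omega
    · simp only [Polymer.tr_right]
      have : (((D.alf.left - (D.rr + 1)).toNat : ℤ)) = D.alf.left - (D.rr + 1) :=
        Int.toNat_of_nonneg (by omega)
      omega
  · -- P is a pyramid
    exact Heap.tr_isPyramid _ _ D.hpyr
  · -- P pyramid-normalized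
    exact ⟨D.alf.tr (-D.alf.left),
      (Heap.tr_isMinimal_iff _ _ _).mpr ⟨D.pl, rfl⟩, by simp⟩
  · -- half-width
    refine ⟨(D.alf.left - mnL (↑(D.alf :: D.pl) : Multiset Polymer)).toNat,
      ⟨D.alf.tr (-D.alf.left), (Heap.tr_isMinimal_iff _ _ _).mpr ⟨D.pl, rfl⟩, ?_, ?_⟩, ?_⟩
    · intro p hp
      erw [Heap.tr_toMultiset] at hp
      obtain ⟨y, hy, rfl⟩ := Multiset.mem_map.mp hp
      have : y ∈ (↑(D.alf :: D.pl) : Multiset Polymer) := by simpa [Heap.toMultiset] using hy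
      have := hμle y this
      simp only [Polymer.tr_left]
      have hw : (((D.alf.left - mnL (↑(D.alf :: D.pl) : Multiset Polymer)).toNat : ℤ))
          = D.alf.left - mnL (↑(D.alf :: D.pl) : Multiset Polymer) :=
        Int.toNat_of_nonneg (by omega)
      omega
    · refine ⟨p₀.tr (-D.alf.left), ?_, ?_⟩
      · erw [Heap.tr_toMultiset]
        refine Multiset.mem_map_of_mem _ ?_
        simpa [Heap.toMultiset] using hp₀
      · simp only [Polymer.tr_left]
        have hw : (((D.alf.left - mnL (↑(D.alf :: D.pl) : Multiset Polymer)).toNat : ℤ))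
            = D.alf.left - mnL (↑(D.alf :: D.pl) : Multiset Polymer) :=
          Int.toNat_of_nonneg (by omega)
        omega
    · -- k < w
      have hw : (((D.alf.left - mnL (↑(D.alf :: D.pl) : Multiset Polymer)).toNat : ℤ))
          = D.alf.left - mnL (↑(D.alf :: D.pl) : Multiset Polymer) :=
        Int.toNat_of_nonneg (by omega)
      omega

theorem heap_multiset_ne_zero {L : List Polymer} (h : L ≠ []) :
    Heap.toMultiset (Quot.mk HeapStep L) ≠ 0 := by
  simpa [Heap.toMultiset] using coe_ne_zero_iff.mpr h

theorem fwd_bwd (C : Heap) (hconn : C.IsConnected) (hnp : ¬ C.IsPyramid)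
    (hnorm : C.Normalized) : bwd0 (fwdParts C) = C := by
  obtain ⟨D, hCeq, hAeq, hmu, hfw⟩ := fwd_setup C hconn hnp hnorm
  have hc1ne : (↑D.c1 : Multiset Polymer) ≠ 0 := coe_ne_zero_iff.mpr D.h1
  have hra := D.hra
  have hk : (((D.alf.left - (D.rr + 1)).toNat : ℤ)) = D.alf.left - (D.rr + 1) :=
    Int.toNat_of_nonneg (by omega)
  set t := -(mnL (↑D.c1 : Multiset Polymer)) with htdef
  set q1 : Heap := Heap.tr t (Quot.mk HeapStep D.c1) with hq1def
  set qH : Heap := Heap.tr (-(D.rr + 1)) (Quot.mk HeapStep D.hl) with hqHdef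
  set qP : Heap := Heap.tr (-D.alf.left) (Quot.mk HeapStep (D.alf :: D.pl)) with hqPdef
  set k : ℕ := (D.alf.left - (D.rr + 1)).toNat with hkdef
  have hbw : bwd0 (q1, k, qH, qP) =
      Heap.tr (-(mnL ((Heap.app (Heap.tr (-(mxR q1.toMultiset + 1)) q1)
          (Heap.app qH (Heap.tr (k : ℤ) qP))).toMultiset)))
        (Heap.app (Heap.tr (-(mxR q1.toMultiset + 1)) q1)
          (Heap.app qH (Heap.tr (k : ℤ) qP))) := rfl
  rw [hfw, hbw]
  -- r1 computation
  have hr1 : mxR q1.toMultiset = D.rr + t := by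
    erw [hq1def, Heap.tr_toMultiset]
    have : Heap.toMultiset (Quot.mk HeapStep D.c1) = (↑D.c1 : Multiset Polymer) := rfl
    rw [this, mxR_tr t hc1ne]
    congr 1
    refine mxR_unique hc1ne (fun p hp => D.hc1 p (Multiset.mem_coe.mp hp)) ?_
    obtain ⟨x₀, hx₀, hx₀r⟩ := D.hrr
    exact ⟨x₀, Multiset.mem_coe.mpr hx₀, hx₀r⟩
  rw [hr1]
  have hA1 : Heap.tr (-(D.rr + t + 1)) q1 = Quot.mk HeapStep (trL (-(D.rr + 1)) D.c1) := by
    have hsc : t + -(D.rr + t + 1) = -(D.rr + 1) := by omega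
    erw [hq1def, Heap.tr_tr, hsc, Heap.tr_mk]
  have hA2 : Heap.tr (k : ℤ) qP = Quot.mk HeapStep (trL (-(D.rr + 1)) (D.alf :: D.pl)) := by
    have hsc : -D.alf.left + (k : ℤ) = -(D.rr + 1) := by omega
    erw [hqPdef, Heap.tr_tr, hsc, Heap.tr_mk]
  have hA3 : qH = Quot.mk HeapStep (trL (-(D.rr + 1)) D.hl) := by
    rw [hqHdef, Heap.tr_mk]
  rw [hA1, hA2, hA3]
  have happ : Heap.app (Quot.mk HeapStep (trL (-(D.rr + 1)) D.c1))
      (Heap.app (Quot.mk HeapStep (trL (-(D.rr + 1)) D.hl))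
        (Quot.mk HeapStep (trL (-(D.rr + 1)) (D.alf :: D.pl)))) =
      C.tr (-(D.rr + 1)) := by
    rw [Heap.app_mk, Heap.app_mk, hCeq, Heap.tr_mk]
    congr 1
    rw [Comp.word, trL_append, trL_append, List.append_assoc]
  rw [happ]
  have hCne : C.toMultiset ≠ 0 := hconn.1
  have hν : mnL ((C.tr (-(D.rr + 1))).toMultiset) = -(D.rr + 1) := by
    rw [Heap.tr_toMultiset, mnL_tr _ hCne]
    have h0 : mnL C.toMultiset = 0 := mnL_unique hCne hnorm.1 hnorm.2
    omega
  rw [hν, Heap.tr_tr]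
  have hz : -(D.rr + 1) + -(-(D.rr + 1)) = 0 := by ring
  rw [hz, Heap.tr_zero]
/-! ### Translation of composed data; forward map on composed words -/

theorem trL_ne_nil {t : ℤ} {L : List Polymer} (h : L ≠ []) : trL t L ≠ [] := by
  intro h0
  exact h (List.map_eq_nil_iff.mp h0)

theorem mem_trL {t : ℤ} {L : List Polymer} {x : Polymer} :
    x ∈ trL t L ↔ ∃ y ∈ L, y.tr t = x := by
  simp [trL]

/-- Translation of a composed-word structure. -/
def Comp.trC (D : Comp) (t : ℤ) : Comp where
  c1 := trL t D.c1
  hl := trL t D.hl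
  pl := trL t D.pl
  alf := D.alf.tr t
  rr := D.rr + t
  h1 := trL_ne_nil D.h1
  hc1 := by
    intro x hx
    obtain ⟨y, hy, rfl⟩ := mem_trL.mp hx
    have := D.hc1 y hy
    simp only [Polymer.tr_right]
    omega
  hrr := by
    obtain ⟨x, hx, hxr⟩ := D.hrr
    exact ⟨x.tr t, List.mem_map_of_mem hx, by simp [hxr]⟩
  hhl := by
    intro x hx
    obtain ⟨y, hy, rfl⟩ := mem_trL.mp hx
    obtain ⟨h1, h2⟩ := D.hhl y hy
    constructor
    · simp only [Polymer.tr_left]; omega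
    · simp only [Polymer.tr_right, Polymer.tr_left]; omega
  hra := by have := D.hra; simp only [Polymer.tr_left]; omega
  hpl := by
    have h := split_trL ({D.alf} : Set Polymer) t D.pl
    rw [Set.image_singleton] at h
    rw [h, D.hpl]
    rfl
  hpyr := by
    have : Quot.mk HeapStep (D.alf.tr t :: trL t D.pl) =
        Heap.tr t (Quot.mk HeapStep (D.alf :: D.pl)) := by
      rw [Heap.tr_mk, trL_cons]
    rw [this]
    exact Heap.tr_isPyramid t _ D.hpyr
  hconn1 := by
    have : Quot.mk HeapStep (trL t D.c1) = Heap.tr t (Quot.mk HeapStep D.c1) := by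
      rw [Heap.tr_mk]
    rw [this]
    exact ordConnected_space_tr t D.hconn1

theorem Comp.trC_word (D : Comp) (t : ℤ) : (D.trC t).word = trL t D.word := by
  rw [Comp.word, Comp.word, Comp.trC]
  simp [trL]

theorem comp_word_ne_nil (D : Comp) : D.word ≠ [] := by
  rw [Comp.word]
  intro h
  obtain ⟨x, hx⟩ := List.exists_mem_of_ne_nil _ D.h1
  rw [show D.c1 ++ D.hl ++ D.alf :: D.pl = D.c1 ++ (D.hl ++ D.alf :: D.pl) from by simp] at h
  rcases List.append_eq_nil_iff.mp h with ⟨h1, -⟩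
  exact D.h1 h1

/-- The forward map computed on a composed word. -/
theorem fwd_on_comp (D : Comp) :
    fwdParts (Quot.mk HeapStep D.word) =
      (Heap.tr (-(mnL (↑D.c1 : Multiset Polymer))) (Quot.mk HeapStep D.c1),
        (D.alf.left - (D.rr + 1)).toNat,
        Heap.tr (-(D.rr + 1)) (Quot.mk HeapStep D.hl),
        Heap.tr (-D.alf.left) (Quot.mk HeapStep (D.alf :: D.pl))) := by
  set B : Heap := Quot.mk HeapStep D.word with hBdef
  have hBne : B.toMultiset ≠ 0 := heap_multiset_ne_zero (comp_word_ne_nil D)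
  have hαeq : theAlpha B = D.alf :=
    theAlpha_eq hBne ⟨D.alf_minimal, D.alf_rightmost⟩
  have hα1 : B.IsMinimal (theAlpha B) := (theAlpha_spec hBne).1
  have hT : B = Quot.mk HeapStep (theAlpha B :: theT B) := theT_spec hα1
  have hT' : B = Quot.mk HeapStep (D.alf :: theT B) := by rwa [hαeq] at hT
  have hBword : B = Quot.mk HeapStep (D.alf :: (D.c1 ++ D.hl ++ D.pl)) := D.word_heq
  have hcanc : heq (theT B) (D.c1 ++ D.hl ++ D.pl) :=
    heq.cancel ((hT'.symm.trans hBword : heq _ _))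
  have hsplit := split_heq ({D.alf} : Set Polymer) hcanc
  rw [D.split_word] at hsplit
  obtain ⟨hfst, hsnd⟩ := hsplit
  have hfst : heq (split {D.alf} (theT B)).1 D.pl := hfst
  have hsnd : heq (split {D.alf} (theT B)).2 (D.c1 ++ D.hl) := hsnd
  have hmult : ((split {D.alf} (theT B)).2 : Multiset Polymer) =
      (↑(D.c1 ++ D.hl) : Multiset Polymer) := hsnd.multiset
  -- the chosen minimum
  have hCLne : ((split {D.alf} (theT B)).2 : Multiset Polymer) ≠ 0 := by
    rw [hmult]
    apply coe_ne_zero_iff.mpr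
    intro h
    rcases List.append_eq_nil_iff.mp h with ⟨h1, -⟩
    exact D.h1 h1
  obtain ⟨hmM, hmmin⟩ := theMin_spec hCLne
  set m := theMin ((split {D.alf} (theT B)).2 : Multiset Polymer) with hmdef
  rw [hmult] at hmM hmmin
  have hmc1 : m ∈ D.c1 := D.min_mem_c1 (Multiset.mem_coe.mp hmM) hmmin
  obtain ⟨hfeq1, hfeq2⟩ := D.filter_eq hmc1 hmmin
  -- the filtered parts as heaps
  have hreach_eq : (fun x => Reach ((split {D.alf} (theT B)).2 : Multiset Polymer) m x) =
      (fun x => Reach (↑(D.c1 ++ D.hl) : Multiset Polymer) m x) := by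
    rw [hmult]
  have hc1heap : Quot.mk HeapStep
      (filterP (fun x => Reach ((split {D.alf} (theT B)).2 : Multiset Polymer) m x)
        ((split {D.alf} (theT B)).2)) = Quot.mk HeapStep D.c1 := by
    rw [hreach_eq]
    have h1 := hsnd.filter_heq (fun x => Reach (↑(D.c1 ++ D.hl) : Multiset Polymer) m x)
    rw [hfeq1] at h1
    exact h1
  have hreach_eq' : (fun x => ¬ Reach ((split {D.alf} (theT B)).2 : Multiset Polymer) m x) =
      (fun x => ¬ Reach (↑(D.c1 ++ D.hl) : Multiset Polymer) m x) := by
    rw [hmult]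
  have hhlheap : Quot.mk HeapStep
      (filterP (fun x => ¬ Reach ((split {D.alf} (theT B)).2 : Multiset Polymer) m x)
        ((split {D.alf} (theT B)).2)) = Quot.mk HeapStep D.hl := by
    rw [hreach_eq']
    have h1 := hsnd.filter_heq (fun x => ¬ Reach (↑(D.c1 ++ D.hl) : Multiset Polymer) m x)
    rw [hfeq2] at h1
    exact h1
  -- multiset of the filtered part
  have hc1mult : (↑(filterP (fun x => Reach ((split {D.alf} (theT B)).2 : Multiset Polymer) m x)
      ((split {D.alf} (theT B)).2)) : Multiset Polymer) = (↑D.c1 : Multiset Polymer) := by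
    have := congrArg Heap.toMultiset hc1heap
    simpa [Heap.toMultiset] using this
  have hc1ne : (↑D.c1 : Multiset Polymer) ≠ 0 := coe_ne_zero_iff.mpr D.h1
  have hrr : mxR (↑(filterP (fun x => Reach ((split {D.alf} (theT B)).2 : Multiset Polymer) m x)
      ((split {D.alf} (theT B)).2)) : Multiset Polymer) = D.rr := by
    rw [hc1mult]
    exact mxR_unique hc1ne (fun p hp => D.hc1 p (Multiset.mem_coe.mp hp))
      (by obtain ⟨x, hx, hxr⟩ := D.hrr; exact ⟨x, Multiset.mem_coe.mpr hx, hxr⟩)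
  have hm0 : m.left = mnL (↑D.c1 : Multiset Polymer) := by
    refine (mnL_unique hc1ne ?_ ⟨m, Multiset.mem_coe.mpr hmc1, rfl⟩).symm
    intro p hp
    refine hmmin p ?_
    rw [Multiset.mem_coe] at hp ⊢
    exact List.mem_append.mpr (Or.inl hp)
  -- the pyramid part
  have hplheap : Quot.mk HeapStep (D.alf :: (split {D.alf} (theT B)).1) =
      Quot.mk HeapStep (D.alf :: D.pl) := hfst.cons D.alf
  -- assemble
  have hfwB : fwdParts B =
      (Heap.tr (-(theMin ((split {theAlpha B} (theT B)).2 : Multiset Polymer)).left)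
        (Quot.mk HeapStep (filterP
          (fun x => Reach ((split {theAlpha B} (theT B)).2 : Multiset Polymer)
            (theMin ((split {theAlpha B} (theT B)).2 : Multiset Polymer)) x)
          ((split {theAlpha B} (theT B)).2))),
       ((theAlpha B).left - (mxR (↑(filterP
          (fun x => Reach ((split {theAlpha B} (theT B)).2 : Multiset Polymer)
            (theMin ((split {theAlpha B} (theT B)).2 : Multiset Polymer)) x)
          ((split {theAlpha B} (theT B)).2)) : Multiset Polymer) + 1)).toNat,
       Heap.tr (-(mxR (↑(filterP
          (fun x => Reach ((split {theAlpha B} (theT B)).2 : Multiset Polymer)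
            (theMin ((split {theAlpha B} (theT B)).2 : Multiset Polymer)) x)
          ((split {theAlpha B} (theT B)).2)) : Multiset Polymer) + 1))
        (Quot.mk HeapStep (filterP
          (fun x => ¬ Reach ((split {theAlpha B} (theT B)).2 : Multiset Polymer)
            (theMin ((split {theAlpha B} (theT B)).2 : Multiset Polymer)) x)
          ((split {theAlpha B} (theT B)).2))),
       Heap.tr (-(theAlpha B).left)
        (Quot.mk HeapStep (theAlpha B :: (split {theAlpha B} (theT B)).1))) := rfl
  rw [hfwB]
  rw [hαeq]
  rw [← hmdef, hrr, hm0, hc1heap, hhlheap, hplheap]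
/-! ### Analysis of the backward map -/

theorem trL_coe (t : ℤ) (L : List Polymer) :
    (↑(trL t L) : Multiset Polymer) = (↑L : Multiset Polymer).map (Polymer.tr t) := by
  simp [trL]

theorem bwd_spec (C₁ : Heap) (k : ℕ) (H : Heap) (P : Heap)
    (hq : NordicQuad (C₁, k, H, P)) :
    (bwd0 (C₁, k, H, P)).IsConnected ∧ ¬(bwd0 (C₁, k, H, P)).IsPyramid ∧
    (bwd0 (C₁, k, H, P)).Normalized ∧ fwdParts (bwd0 (C₁, k, H, P)) = (C₁, k, H, P) := by
  simp only [NordicQuad] at hq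
  obtain ⟨hC1conn, hC1norm, hHcond, hPpyr, hPnorm, w, hww, hkw⟩ := hq
  obtain ⟨L₁, hL₁⟩ := Quot.exists_rep C₁
  obtain ⟨LH, hLH⟩ := Quot.exists_rep H
  obtain ⟨aP, haP, hauniq⟩ := hPpyr
  obtain ⟨TP, hTP⟩ := haP
  have haPl : aP.left = 0 := by
    obtain ⟨a', ha'min, ha'l⟩ := hPnorm
    rwa [hauniq a' ha'min] at ha'l
  obtain ⟨aw, hawmin, hwlow, hwwit⟩ := hww
  have hawa : aw = aP := hauniq aw hawmin
  rw [hawa, haPl] at hwlow hwwit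
  have hC1ne : C₁.toMultiset ≠ 0 := hC1conn.1
  have hC1mult : C₁.toMultiset = (↑L₁ : Multiset Polymer) := by rw [← hL₁]; rfl
  have hHmult : H.toMultiset = (↑LH : Multiset Polymer) := by rw [← hLH]; rfl
  have hPmult : P.toMultiset = (↑(aP :: TP) : Multiset Polymer) := by rw [hTP]; rfl
  have hL₁ne : L₁ ≠ [] := by
    apply nonempty_list_of_multiset
    rw [hL₁]; exact hC1ne
  obtain ⟨hr₁le, x₁, hx₁, hx₁r⟩ := mxR_spec hC1ne
  set r₁ := mxR C₁.toMultiset with hr₁def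
  set t₁ : ℤ := -(r₁ + 1) with ht₁def
  have hPpyr' : Heap.IsPyramid (Quot.mk HeapStep (aP :: TP)) := by
    rw [← hTP]
    exact ⟨aP, ⟨TP, hTP⟩, hauniq⟩
  -- the base composed structure
  have hsplitTP : (split ({aP.tr (k : ℤ)} : Set Polymer) (trL (k : ℤ) TP)).2 = [] := by
    have h := split_trL ({aP} : Set Polymer) (k : ℤ) TP
    rw [Set.image_singleton] at h
    rw [h, split_snd_nil_of_pyramid hPpyr']
    rfl
  have hkz : (0 : ℤ) ≤ (k : ℤ) := Int.ofNat_nonneg k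
  set D0 : Comp := ⟨trL t₁ L₁, LH, trL (k : ℤ) TP, aP.tr (k : ℤ), -1,
    trL_ne_nil hL₁ne,
    (by
      intro x hx
      obtain ⟨y, hy, rfl⟩ := mem_trL.mp hx
      have := hr₁le y (by rw [hC1mult]; exact Multiset.mem_coe.mpr hy)
      simp only [Polymer.tr_right]
      omega),
    (by
      refine ⟨x₁.tr t₁, ?_, by simp only [Polymer.tr_right]; omega⟩
      apply mem_trL.mpr
      exact ⟨x₁, Multiset.mem_coe.mp (hC1mult ▸ hx₁), rfl⟩),
    (by
      intro x hx
      have := hHcond x (by rw [hHmult]; exact Multiset.mem_coe.mpr hx)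
      simp only [Polymer.tr_left, haPl]
      omega),
    (by simp only [Polymer.tr_left, haPl]; omega),
    hsplitTP,
    (by
      have he : Quot.mk HeapStep (aP.tr (k : ℤ) :: trL (k : ℤ) TP) = P.tr (k : ℤ) := by
        rw [hTP, Heap.tr_mk, trL_cons]
      rw [he]
      exact Heap.tr_isPyramid _ _ ⟨aP, ⟨TP, hTP⟩, hauniq⟩),
    (by
      have he : Quot.mk HeapStep (trL t₁ L₁) = C₁.tr t₁ := by
        rw [← hL₁, Heap.tr_mk]
      rw [he]
      exact ordConnected_space_tr _ hC1conn.2)⟩ with hD0def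
  have hmu0 : ∃ p ∈ aP.tr (k : ℤ) :: trL (k : ℤ) TP, p.left ≤ -1 := by
    obtain ⟨pw, hpw, hpwl⟩ := hwwit
    refine ⟨pw.tr (k : ℤ), ?_, ?_⟩
    · show pw.tr (k : ℤ) ∈ aP.tr (k : ℤ) :: trL (k : ℤ) TP
      rw [← trL_cons]
      apply mem_trL.mpr
      exact ⟨pw, Multiset.mem_coe.mp (hPmult ▸ hpw), rfl⟩
    · show (pw.tr (k : ℤ)).left ≤ -1
      simp only [Polymer.tr_left]
      omega
  -- bwd0 computation
  set A : Heap := Heap.app (Heap.tr (-(r₁ + 1)) C₁) (Heap.app H (Heap.tr (k : ℤ) P))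
    with hAdef
  have hbwd : bwd0 (C₁, k, H, P) = A.tr (-(mnL A.toMultiset)) := rfl
  have hA : A = Quot.mk HeapStep D0.word := by
    rw [hAdef, ← hL₁, ← hLH, hTP, Heap.tr_mk, Heap.tr_mk, Heap.app_mk, Heap.app_mk]
    show _ = Quot.mk HeapStep (trL t₁ L₁ ++ LH ++ aP.tr (k : ℤ) :: trL (k : ℤ) TP)
    rw [← trL_cons, List.append_assoc]
  have hwordne : ((↑D0.word) : Multiset Polymer) ≠ 0 :=
    coe_ne_zero_iff.mpr (comp_word_ne_nil D0)
  have hν : mnL A.toMultiset = mnL ((↑D0.word) : Multiset Polymer) := by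
    rw [hA]; rfl
  set ν := mnL ((↑D0.word) : Multiset Polymer) with hνdef
  obtain ⟨hνle, y₀, hy₀, hy₀l⟩ := mnL_spec hwordne
  set D1 : Comp := D0.trC (-ν) with hD1def
  have hB : bwd0 (C₁, k, H, P) = Quot.mk HeapStep D1.word := by
    rw [hbwd, hν, hA, Heap.tr_mk, hD1def, Comp.trC_word]
  -- membership in the subtype
  have hBmult : (bwd0 (C₁, k, H, P)).toMultiset =
      ((↑D0.word) : Multiset Polymer).map (Polymer.tr (-ν)) := by
    rw [hB, hD1def]
    show ((↑(D0.trC (-ν)).word) : Multiset Polymer) = _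
    rw [Comp.trC_word, trL_coe]
  refine ⟨⟨?_, ?_⟩, ?_, ⟨?_, ?_⟩, ?_⟩
  · -- nonempty
    rw [hBmult]
    simpa [Multiset.map_eq_zero] using hwordne
  · -- space OrdConnected
    rw [hB]
    apply Comp.word_space_ordConnected
    obtain ⟨p, hp, hpl⟩ := hmu0
    refine ⟨p.tr (-ν), ?_, ?_⟩
    · show p.tr (-ν) ∈ (aP.tr (k : ℤ)).tr (-ν) :: trL (-ν) (trL (k : ℤ) TP)
      rcases List.mem_cons.mp hp with h' | hp'
      · rw [h']; exact List.mem_cons_self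
      · exact List.mem_cons_of_mem _ (mem_trL.mpr ⟨p, hp', rfl⟩)
    · show (p.tr (-ν)).left ≤ -1 + (-ν)
      simp only [Polymer.tr_left]
      omega
  · -- not a pyramid
    rw [hB]
    exact D1.not_pyramid
  · -- normalized: lower bound
    intro p hp
    rw [hBmult] at hp
    obtain ⟨y, hy, rfl⟩ := Multiset.mem_map.mp hp
    have := hνle y hy
    simp only [Polymer.tr_left]
    omega
  · -- normalized: witness
    refine ⟨y₀.tr (-ν), ?_, by simp only [Polymer.tr_left]; omega⟩
    rw [hBmult]
    exact Multiset.mem_map_of_mem _ hy₀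
  · -- fwdParts recovers the quadruple
    rw [hB, fwd_on_comp D1]
    have hD1c1 : D1.c1 = trL (t₁ + -ν) L₁ := by
      show trL (-ν) (trL t₁ L₁) = _
      rw [trL_trL]
    have hD1hl : D1.hl = trL (-ν) LH := rfl
    have hD1pl : D1.alf :: D1.pl = trL ((k : ℤ) + -ν) (aP :: TP) := by
      show (aP.tr (k : ℤ)).tr (-ν) :: trL (-ν) (trL (k : ℤ) TP) = _
      rw [trL_trL, Polymer.tr_tr, trL_cons]
    have hD1alf : D1.alf.left = (k : ℤ) + -ν := by
      show ((aP.tr (k : ℤ)).tr (-ν)).left = _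
      simp only [Polymer.tr_left]
      omega
    have hD1rr : D1.rr = -1 + -ν := rfl
    have hmnL1 : mnL ((↑L₁ : Multiset Polymer)) = 0 := by
      refine mnL_unique (coe_ne_zero_iff.mpr hL₁ne) ?_ ?_
      · intro p hp
        exact hC1norm.1 p (by rw [hC1mult]; exact hp)
      · obtain ⟨p, hp, hpl⟩ := hC1norm.2
        exact ⟨p, by rwa [hC1mult] at hp, hpl⟩
    have hT1 : Heap.tr (-(mnL (↑D1.c1 : Multiset Polymer))) (Quot.mk HeapStep D1.c1) = C₁ := by
      rw [hD1c1, trL_coe, mnL_tr _ (coe_ne_zero_iff.mpr hL₁ne), hmnL1]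
      have he : Quot.mk HeapStep (trL (t₁ + -ν) L₁) = Heap.tr (t₁ + -ν) (Quot.mk HeapStep L₁) := by
        rw [Heap.tr_mk]
      erw [he, Heap.tr_tr]
      have hz : t₁ + -ν + -(0 + (t₁ + -ν)) = 0 := by ring
      erw [hz, Heap.tr_zero, hL₁]
    have hT2 : (D1.alf.left - (D1.rr + 1)).toNat = k := by
      rw [hD1alf, hD1rr]
      have : (k : ℤ) + -ν - (-1 + -ν + 1) = (k : ℤ) := by ring
      rw [this]
      exact Int.toNat_natCast k
    have hT3 : Heap.tr (-(D1.rr + 1)) (Quot.mk HeapStep D1.hl) = H := by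
      rw [hD1rr, hD1hl]
      have he : Quot.mk HeapStep (trL (-ν) LH) = Heap.tr (-ν) (Quot.mk HeapStep LH) := by
        rw [Heap.tr_mk]
      erw [he, Heap.tr_tr]
      have hz : -ν + -(-1 + -ν + 1) = 0 := by ring
      erw [hz, Heap.tr_zero, hLH]
    have hT4 : Heap.tr (-D1.alf.left) (Quot.mk HeapStep (D1.alf :: D1.pl)) = P := by
      rw [hD1alf, hD1pl]
      have he : Quot.mk HeapStep (trL ((k : ℤ) + -ν) (aP :: TP)) =
          Heap.tr ((k : ℤ) + -ν) (Quot.mk HeapStep (aP :: TP)) := by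
        rw [Heap.tr_mk]
      erw [he, Heap.tr_tr]
      have hz : (k : ℤ) + -ν + -((k : ℤ) + -ν) = 0 := by ring
      erw [hz, Heap.tr_zero, ← hTP]
    rw [hT1, hT2, hT3, hT4]
theorem nordic_decomposition :
    ∃ e : {C : Heap // C.IsConnected ∧ ¬C.IsPyramid ∧ C.Normalized} ≃
          {q : Heap × ℕ × Heap × Heap // NordicQuad q},
      ∀ C, C.1.totalLength
        = (e C).1.1.totalLength + (e C).1.2.2.1.totalLength
          + (e C).1.2.2.2.totalLength := by
  refine ⟨⟨fun C => ⟨fwdParts C.1, fwd_quad C.1 C.2.1 C.2.2.1 C.2.2.2⟩,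
      fun q => ⟨bwd0 q.1,
        (bwd_spec q.1.1 q.1.2.1 q.1.2.2.1 q.1.2.2.2 q.2).1,
        (bwd_spec q.1.1 q.1.2.1 q.1.2.2.1 q.1.2.2.2 q.2).2.1,
        (bwd_spec q.1.1 q.1.2.1 q.1.2.2.1 q.1.2.2.2 q.2).2.2.1⟩,
      fun C => Subtype.ext (fwd_bwd C.1 C.2.1 C.2.2.1 C.2.2.2),
      fun q => Subtype.ext (bwd_spec q.1.1 q.1.2.1 q.1.2.2.1 q.1.2.2.2 q.2).2.2.2⟩, ?_⟩
  intro C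
  conv_lhs => rw [← fwd_bwd C.1 C.2.1 C.2.2.1 C.2.2.2]
  rw [bwd0_totalLength]
  rfl
end
end

section
/- Let S be the unique formal power series over ℚ with zero constant term satisfying S = t(1+2S)(1+S), and set R = S + t(1+S), Q = (2−2t)S − t, D = S + S²/(1−R). Then S² = D·Q·(1−R) as formal power series; equivalently, S²·R^k/(1−R) = D·Q·R^k for all k ≥ 0. -/
/-!
STATEMENT 14: With `S` the unique formal power series over `ℚ` with zero constant
term satisfying `S = t(1+2S)(1+S)`, `R = S + t(1+S)`, `Q = (2-2t)S - t` and
`D = S + S²/(1-R)`: `S² = D·Q·(1-R)`, and equivalently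
`S²·R^k/(1-R) = D·Q·R^k` for all `k ≥ 0`.
-/

open PowerSeries in
theorem sq_S_eq_D_Q (S R Q D : PowerSeries ℚ)
    (hS0 : constantCoeff S = 0)
    (hS : S = X * (1 + 2 * S) * (1 + S))
    (hR : R = S + X * (1 + S))
    (hQ : Q = (2 - 2 * X) * S - X)
    (hD : D = S + S ^ 2 * (1 - R)⁻¹) :
    S ^ 2 = D * Q * (1 - R) ∧
    ∀ k : ℕ, S ^ 2 * R ^ k * (1 - R)⁻¹ = D * Q * R ^ k := by
  have hRc : constantCoeff (1 - R) ≠ 0 := by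
    simp [hR, hS0]
  have hinv : (1 - R) * (1 - R)⁻¹ = 1 := PowerSeries.mul_inv_cancel _ hRc
  have key : Q * (1 - R + S) = S := by
    rw [hQ, hR]
    linear_combination (1 - (X : PowerSeries ℚ)) * hS
  have h1 : S ^ 2 = D * Q * (1 - R) := by
    rw [hD]
    linear_combination (-S) * key + (-(S ^ 2) * Q) * hinv
  refine ⟨h1, fun k => ?_⟩
  linear_combination (R ^ k * (1 - R)⁻¹) * h1 + (D * Q * R ^ k) * hinv
end

section
/- Let S be the unique formal power series over ℚ with zero constant term satisfying S = t(1+2S)(1+S), and set R = S + t(1+S) and Q = (2−2t)S − t. Then as formal power series: 2t·(1 + R²) = (1−t)²·R and t·(1 + Q²) = (1 − 4t + t²)·Q. -/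
/-!
STATEMENT 15: With `S` the unique formal power series over `ℚ` with zero constant
term satisfying `S = t(1+2S)(1+S)`, `R = S + t(1+S)` and `Q = (2-2t)S - t`:
`2t(1 + R²) = (1-t)²·R` and `t(1 + Q²) = (1 - 4t + t²)·Q`.
-/

open PowerSeries in
theorem R_Q_algebraic_equations (S R Q : PowerSeries ℚ)
    (hS0 : constantCoeff S = 0)
    (hS : S = X * (1 + 2 * S) * (1 + S))
    (hR : R = S + X * (1 + S))
    (hQ : Q = (2 - 2 * X) * S - X) :
    2 * X * (1 + R ^ 2) = (1 - X) ^ 2 * R ∧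
    X * (1 + Q ^ 2) = (1 - 4 * X + X ^ 2) * Q := by
  subst hR hQ
  constructor
  · linear_combination (-(1 + PowerSeries.X (R := ℚ))^2) * hS
  · linear_combination (-2 * (1 - PowerSeries.X (R := ℚ))^2) * hS
end

section
/- Let ρ = 3 − √8. For a complex number z in the open unit disk with z ∉ [ρ, 1) and z ≠ 0, define S(z) = (1 − 3z − √(1 − 6z + z²))/(4z) using the principal branch of the complex square root, and set R(z) = S(z) + z(1 + S(z)) and Q(z) = (2 − 2z)S(z) − z. Then |R(z)| < 1 and |Q(z)| < 1. -/
/-!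
STATEMENT 16: Let `ρ = 3 - √8`. For `z` in the open unit disk with `z ∉ [ρ, 1)`
and `z ≠ 0`, define (with the principal branch of the complex square root)
`S(z) = (1 - 3z - √(1 - 6z + z²))/(4z)`, `R(z) = S(z) + z(1 + S(z))` and
`Q(z) = (2 - 2z)S(z) - z`. Then `|R(z)| < 1` and `|Q(z)| < 1`.
-/

noncomputable def rhoN : ℝ := 3 - Real.sqrt 8

/-- The analytic continuation of the half-animal generating function, using the
principal branch of the complex square root. -/
noncomputable def Sc (z : ℂ) : ℂ :=
  (1 - 3 * z - (1 - 6 * z + z ^ 2) ^ ((1 : ℂ) / 2)) / (4 * z)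

noncomputable def Rc (z : ℂ) : ℂ := Sc z + z * (1 + Sc z)

noncomputable def Qc (z : ℂ) : ℂ := (2 - 2 * z) * Sc z - z

/-! ### Auxiliary development -/

noncomputable def wc (z : ℂ) : ℂ := (1 - 6 * z + z ^ 2) ^ ((1 : ℂ) / 2)

def Dom : Set ℂ :=
  {z : ℂ | ‖z‖ < 1 ∧ z ∉ (fun x : ℝ => (x : ℂ)) '' Set.Ico rhoN 1}

lemma sqrt8_sq : Real.sqrt 8 ^ 2 = 8 := Real.sq_sqrt (by norm_num)
lemma sqrt8_nonneg : 0 ≤ Real.sqrt 8 := Real.sqrt_nonneg 8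

lemma rhoN_pos : 0 < rhoN := by
  have h1 := sqrt8_sq; have h2 := sqrt8_nonneg
  rw [rhoN]; nlinarith

lemma abs_lt_one_iff (z : ℂ) : ‖z‖ < 1 ↔ z.re ^ 2 + z.im ^ 2 < 1 := by
  have h1 : ‖z‖ ^ 2 = z.re ^ 2 + z.im ^ 2 := by
    rw [Complex.sq_norm, Complex.normSq_apply]; ring
  have h2 : 0 ≤ ‖z‖ := norm_nonneg _
  constructor <;> intro h <;> nlinarith

lemma dom_re_lt (z : ℂ) (hz : z ∈ Dom) (him : z.im = 0) : z.re < rhoN := by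
  obtain ⟨h1, h2⟩ := hz
  by_contra h
  push_neg at h
  apply h2
  refine ⟨z.re, ⟨h, ?_⟩, ?_⟩
  · have := Complex.abs_re_le_norm z
    cases abs_le.mp this; linarith
  · exact Complex.ext (Complex.ofReal_re _) (by rw [Complex.ofReal_im, him])

lemma dom_eq : Dom = (Metric.ball (0:ℂ) 1 ∩ {c : ℂ | c.re < rhoN}
      ∪ Metric.ball (0:ℂ) 1 ∩ {c : ℂ | 0 < c.im})
    ∪ (Metric.ball (0:ℂ) 1 ∩ {c : ℂ | c.re < rhoN}
      ∪ Metric.ball (0:ℂ) 1 ∩ {c : ℂ | c.im < 0}) := by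
  ext w
  simp only [Set.mem_union, Set.mem_inter_iff, Metric.mem_ball, dist_zero_right,
    Set.mem_setOf_eq]
  constructor
  · intro hw
    have habs := hw.1
    rcases lt_trichotomy w.im 0 with h | h | h
    · exact Or.inr (Or.inr ⟨habs, h⟩)
    · exact Or.inl (Or.inl ⟨habs, dom_re_lt w hw h⟩)
    · exact Or.inl (Or.inr ⟨habs, h⟩)
  · intro hw
    have habs : ‖w‖ < 1 := by tauto
    refine ⟨habs, ?_⟩
    rintro ⟨x, hx, rfl⟩
    simp only [Complex.ofReal_re, Complex.ofReal_im] at hw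
    rcases hw with (⟨_, h⟩ | ⟨_, h⟩) | (⟨_, h⟩ | ⟨_, h⟩)
    · exact absurd h (not_lt.mpr hx.1)
    · exact absurd h (lt_irrefl 0)
    · exact absurd h (not_lt.mpr hx.1)
    · exact absurd h (lt_irrefl 0)

lemma dom_preconnected : IsPreconnected Dom := by
  rw [dom_eq]
  have hb : Convex ℝ (Metric.ball (0:ℂ) 1) := convex_ball 0 1
  have h3 : IsPreconnected (Metric.ball (0:ℂ) 1 ∩ {c : ℂ | c.re < rhoN}) :=
    (hb.inter (convex_halfSpace_re_lt rhoN)).isPreconnected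
  have h1 : IsPreconnected (Metric.ball (0:ℂ) 1 ∩ {c : ℂ | 0 < c.im}) :=
    (hb.inter (convex_halfSpace_im_gt 0)).isPreconnected
  have h2 : IsPreconnected (Metric.ball (0:ℂ) 1 ∩ {c : ℂ | c.im < 0}) :=
    (hb.inter (convex_halfSpace_im_lt 0)).isPreconnected
  have hrho := rhoN_pos
  have hmem : ∀ y : ℝ, y^2 ≤ 1/2 →
      (Complex.mk (-1/2) y) ∈ Metric.ball (0:ℂ) 1 ∩ {c : ℂ | c.re < rhoN} := by
    intro y hy
    constructor
    · simp only [Metric.mem_ball, dist_zero_right]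
      rw [abs_lt_one_iff]
      show (-1/2:ℝ) ^ 2 + y ^ 2 < 1
      nlinarith
    · show (-1/2:ℝ) < rhoN; linarith
  have hA : IsPreconnected (Metric.ball (0:ℂ) 1 ∩ {c : ℂ | c.re < rhoN}
      ∪ Metric.ball (0:ℂ) 1 ∩ {c : ℂ | 0 < c.im}) := by
    apply IsPreconnected.union (Complex.mk (-1/2) (1/2))
    · exact hmem (1/2) (by norm_num)
    · exact ⟨(hmem (1/2) (by norm_num)).1, by norm_num [Set.mem_setOf_eq]⟩
    · exact h3
    · exact h1
  have hB : IsPreconnected (Metric.ball (0:ℂ) 1 ∩ {c : ℂ | c.re < rhoN}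
      ∪ Metric.ball (0:ℂ) 1 ∩ {c : ℂ | c.im < 0}) := by
    apply IsPreconnected.union (Complex.mk (-1/2) (-1/2))
    · exact hmem (-1/2) (by norm_num)
    · exact ⟨(hmem (-1/2) (by norm_num)).1, by norm_num [Set.mem_setOf_eq]⟩
    · exact h3
    · exact h2
  apply IsPreconnected.union (Complex.mk (-1/2) 0)
  · exact Or.inl (hmem 0 (by norm_num))
  · exact Or.inl (hmem 0 (by norm_num))
  · exact hA
  · exact hB

lemma f_re (z : ℂ) : (1 - 6 * z + z ^ 2).re = 1 - 6 * z.re + z.re ^ 2 - z.im ^ 2 := by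
  simp only [pow_two, Complex.add_re, Complex.sub_re, Complex.one_re, Complex.mul_re,
    Complex.mul_im, Complex.re_ofNat, Complex.im_ofNat]
  ring

lemma f_im (z : ℂ) : (1 - 6 * z + z ^ 2).im = 2 * z.im * (z.re - 3) := by
  simp only [pow_two, Complex.add_im, Complex.sub_im, Complex.one_im, Complex.mul_re,
    Complex.mul_im, Complex.re_ofNat, Complex.im_ofNat]
  ring

lemma dom_cond (z : ℂ) (hz : z ∈ Dom) :
    0 < (1 - 6 * z + z ^ 2).re ∨ (1 - 6 * z + z ^ 2).im ≠ 0 := by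
  have habs := (abs_lt_one_iff z).mp hz.1
  by_cases him : z.im = 0
  · left
    have hre : z.re < rhoN := dom_re_lt z hz him
    rw [f_re, him]
    have h1 := sqrt8_sq; have h2 := sqrt8_nonneg
    rw [rhoN] at hre
    nlinarith
  · right
    rw [f_im]
    have hx3 : z.re < 3 := by nlinarith
    intro h
    rcases mul_eq_zero.mp h with h' | h'
    · rcases mul_eq_zero.mp h' with h'' | h''
      · norm_num at h''
      · exact him h''
    · linarith

lemma dom_f_ne (z : ℂ) (hz : z ∈ Dom) : 1 - 6 * z + z ^ 2 ≠ 0 := by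
  intro h
  rcases dom_cond z hz with h' | h' <;> rw [h] at h' <;> simp at h'

lemma re_w_pos (z : ℂ) (hz : z ∈ Dom) : 0 < (wc z).re := by
  have hf0 := dom_f_ne z hz
  have hfarg := dom_cond z hz
  set f := 1 - 6 * z + z ^ 2 with hf
  have harg_ne : Complex.arg f ≠ Real.pi := by
    intro h
    rcases (Complex.arg_eq_pi_iff).mp h with ⟨h1, h2⟩
    rcases hfarg with h | h
    · linarith
    · exact h h2
  have h1 : wc z = Complex.exp (Complex.log f * (1 / 2)) := by
    rw [wc, Complex.cpow_def_of_ne_zero hf0, mul_comm]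
  rw [h1, Complex.exp_re]
  have him : (Complex.log f * (1 / 2)).im = Complex.arg f / 2 := by
    simp [Complex.mul_im, Complex.log_im]
    ring
  rw [him]
  have hlt : Complex.arg f < Real.pi := lt_of_le_of_ne (Complex.arg_le_pi f) harg_ne
  have hgt : -Real.pi < Complex.arg f := Complex.neg_pi_lt_arg f
  have hcos : 0 < Real.cos (Complex.arg f / 2) := by
    apply Real.cos_pos_of_mem_Ioo
    constructor <;> [linarith; linarith]
  positivity

lemma wsq (z : ℂ) (hz : z ∈ Dom) : wc z * wc z = 1 - 6 * z + z ^ 2 := by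
  rw [wc, ← Complex.cpow_add _ _ (dom_f_ne z hz)]
  norm_num

lemma wc_contOn : ContinuousOn wc Dom := by
  intro z hz
  apply ContinuousAt.continuousWithinAt
  apply ContinuousAt.cpow
  · fun_prop
  · exact continuousAt_const
  · exact dom_cond z hz

lemma base_mem : (-(1/2) : ℂ) ∈ Dom := by
  constructor
  · rw [abs_lt_one_iff]
    norm_num
  · rintro ⟨x, hx, hxe⟩
    have : x = -(1/2) := by
      have := congrArg Complex.re hxe
      simpa using this
    rw [this] at hx
    have := rhoN_pos
    have := hx.1
    linarith

lemma phi_sign_pos (φ : ℂ → ℝ) (hc : ContinuousOn φ Dom) (hnz : ∀ w ∈ Dom, φ w ≠ 0)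
    (hb : 0 < φ (-(1/2) : ℂ)) : ∀ w ∈ Dom, 0 < φ w := by
  intro w hw
  by_contra h
  push_neg at h
  have hlt : φ w < 0 := lt_of_le_of_ne h (hnz w hw)
  have him : IsPreconnected (φ '' Dom) := dom_preconnected.image φ hc
  have h0 : (0:ℝ) ∈ φ '' Dom :=
    him.ordConnected.out (Set.mem_image_of_mem φ hw) (Set.mem_image_of_mem φ base_mem)
      ⟨le_of_lt hlt, le_of_lt hb⟩
  obtain ⟨v, hv, hv0⟩ := h0
  exact hnz v hv hv0

/-! ### The two key real-polynomial facts -/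

lemma P1_im (z : ℂ) :
    (((1 - (starRingEnd ℂ) z) ^ 2 * (1 + z)) ^ 2 * (1 - 6 * z + z ^ 2)).im
      = 32 * z.im * (z.re ^ 2 + z.im ^ 2 - 1)
          * (z.re * (1 - z.re) ^ 2 + z.im ^ 2 * (z.re - 2)) := by
  obtain ⟨x, y⟩ := z
  simp only [pow_two, Complex.mul_im, Complex.mul_re, Complex.sub_re, Complex.sub_im,
    Complex.add_re, Complex.add_im, Complex.one_re, Complex.one_im, Complex.conj_re,
    Complex.conj_im, Complex.re_ofNat, Complex.im_ofNat]
  ring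

lemma P1_re (z : ℂ) :
    (((1 - (starRingEnd ℂ) z) ^ 2 * (1 + z)) ^ 2 * (1 - 6 * z + z ^ 2)).re
      = 1 + 20*z.im^2 - 90*z.im^4 + 20*z.im^6 + z.im^8 - 8*z.re + 40*z.re*z.im^2
        + 40*z.re*z.im^4 - 8*z.re*z.im^6 + 12*z.re^2 - 132*z.re^2*z.im^2
        + 52*z.re^2*z.im^4 + 4*z.re^2*z.im^6 + 8*z.re^3 + 48*z.re^3*z.im^2
        - 24*z.re^3*z.im^4 - 26*z.re^4 + 44*z.re^4*z.im^2 + 6*z.re^4*z.im^4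
        + 8*z.re^5 - 24*z.re^5*z.im^2 + 12*z.re^6 + 4*z.re^6*z.im^2 - 8*z.re^7 + z.re^8 := by
  obtain ⟨x, y⟩ := z
  simp only [pow_two, Complex.mul_im, Complex.mul_re, Complex.sub_re, Complex.sub_im,
    Complex.add_re, Complex.add_im, Complex.one_re, Complex.one_im, Complex.conj_re,
    Complex.conj_im, Complex.re_ofNat, Complex.im_ofNat]
  ring

lemma P2_im (z : ℂ) :
    (((1 - 4 * (starRingEnd ℂ) z + ((starRingEnd ℂ) z) ^ 2) * (1 - z)) ^ 2
        * (1 - 6 * z + z ^ 2)).im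
      = 8 * z.im * (z.re ^ 2 + z.im ^ 2 - 1)
          * (z.re * (1 - 4*z.re + z.re ^ 2) + z.im ^ 2 * (z.re - 4)) := by
  obtain ⟨x, y⟩ := z
  simp only [pow_two, Complex.mul_im, Complex.mul_re, Complex.sub_re, Complex.sub_im,
    Complex.add_re, Complex.add_im, Complex.one_re, Complex.one_im, Complex.conj_re,
    Complex.conj_im, Complex.re_ofNat, Complex.im_ofNat]
  ring

lemma P2_re (z : ℂ) :
    (((1 - 4 * (starRingEnd ℂ) z + ((starRingEnd ℂ) z) ^ 2) * (1 - z)) ^ 2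
        * (1 - 6 * z + z ^ 2)).re
      = 1 + 32*z.im^2 + 126*z.im^4 + 32*z.im^6 + z.im^8 - 16*z.re - 208*z.re*z.im^2
        - 208*z.re*z.im^4 - 16*z.re*z.im^6 + 96*z.re^2 + 492*z.re^2*z.im^2
        + 160*z.re^2*z.im^4 + 4*z.re^2*z.im^6 - 272*z.re^3 - 480*z.re^3*z.im^2
        - 48*z.re^3*z.im^4 + 382*z.re^4 + 224*z.re^4*z.im^2 + 6*z.re^4*z.im^4
        - 272*z.re^5 - 48*z.re^5*z.im^2 + 96*z.re^6 + 4*z.re^6*z.im^2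
        - 16*z.re^7 + z.re^8 := by
  obtain ⟨x, y⟩ := z
  simp only [pow_two, Complex.mul_im, Complex.mul_re, Complex.sub_re, Complex.sub_im,
    Complex.add_re, Complex.add_im, Complex.one_re, Complex.one_im, Complex.conj_re,
    Complex.conj_im, Complex.re_ofNat, Complex.im_ofNat]
  ring

lemma keyR (x y : ℝ) (hd : x^2 + y^2 < 1) (hrho : y = 0 → x < rhoN)
    (him : 32 * y * (x ^ 2 + y ^ 2 - 1) * (x * (1 - x) ^ 2 + y ^ 2 * (x - 2)) = 0)
    (hre : 1 + 20*y^2 - 90*y^4 + 20*y^6 + y^8 - 8*x + 40*x*y^2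
        + 40*x*y^4 - 8*x*y^6 + 12*x^2 - 132*x^2*y^2
        + 52*x^2*y^4 + 4*x^2*y^6 + 8*x^3 + 48*x^3*y^2
        - 24*x^3*y^4 - 26*x^4 + 44*x^4*y^2 + 6*x^4*y^4
        + 8*x^5 - 24*x^5*y^2 + 12*x^6 + 4*x^6*y^2 - 8*x^7 + x^8 ≤ 0) : False := by
  have hx1 : x < 1 := by nlinarith
  have hxm1 : -1 < x := by nlinarith
  by_cases hy : y = 0
  · subst hy
    have h1 := sqrt8_sq; have h2 := sqrt8_nonneg
    have hxr : x < 3 - Real.sqrt 8 := by simpa [rhoN] using hrho rfl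
    have h6 : 0 < 1 - 6*x + x^2 := by nlinarith
    have e : 1 + 20*(0:ℝ)^2 - 90*(0:ℝ)^4 + 20*(0:ℝ)^6 + (0:ℝ)^8 - 8*x + 40*x*(0:ℝ)^2
        + 40*x*(0:ℝ)^4 - 8*x*(0:ℝ)^6 + 12*x^2 - 132*x^2*(0:ℝ)^2
        + 52*x^2*(0:ℝ)^4 + 4*x^2*(0:ℝ)^6 + 8*x^3 + 48*x^3*(0:ℝ)^2
        - 24*x^3*(0:ℝ)^4 - 26*x^4 + 44*x^4*(0:ℝ)^2 + 6*x^4*(0:ℝ)^4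
        + 8*x^5 - 24*x^5*(0:ℝ)^2 + 12*x^6 + 4*x^6*(0:ℝ)^2 - 8*x^7 + x^8
        = (1 - 6*x + x^2) * ((1-x)^4 * (1+x)^2) := by ring
    rw [e] at hre
    have hp : 0 < (1-x)^4 * (1+x)^2 := by
      have := pow_pos (show (0:ℝ) < 1 - x by linarith) 4
      have := pow_pos (show (0:ℝ) < 1 + x by linarith) 2
      positivity
    nlinarith
  · have hC : x * (1 - x) ^ 2 + y ^ 2 * (x - 2) = 0 := by
      rcases mul_eq_zero.mp him with h | h
      · rcases mul_eq_zero.mp h with h' | h'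
        · rcases mul_eq_zero.mp h' with h'' | h''
          · norm_num at h''
          · exact absurd h'' hy
        · nlinarith
      · exact h
    have hy2 : 0 < y^2 := by positivity
    have h2x : 0 < 2 - x := by linarith
    have hxpos : 0 < x := by
      by_contra hx
      push_neg at hx
      have h1 : x * (1-x)^2 ≤ 0 := mul_nonpos_of_nonpos_of_nonneg hx (sq_nonneg _)
      nlinarith
    have key : (1 + 20*y^2 - 90*y^4 + 20*y^6 + y^8 - 8*x + 40*x*y^2
        + 40*x*y^4 - 8*x*y^6 + 12*x^2 - 132*x^2*y^2
        + 52*x^2*y^4 + 4*x^2*y^6 + 8*x^3 + 48*x^3*y^2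
        - 24*x^3*y^4 - 26*x^4 + 44*x^4*y^2 + 6*x^4*y^4
        + 8*x^5 - 24*x^5*y^2 + 12*x^6 + 4*x^6*y^2 - 8*x^7 + x^8) * (2-x)^4
        = 16*(1-x)^4*(x^2-2*x-1)^2 := by
      linear_combination ((-160) + (720)*y^2 + (-160)*y^4 + (-8)*y^6 + (280)*x + (-1480)*x*y^2 + (300)*x*y^4 + (12)*x*y^6 + (136)*x^2 + (874)*x^2*y^2 + (-236)*x^2*y^4 + (-6)*x^2*y^6 + (-551)*x^3 + (123)*x^3*y^2 + (103)*x^3*y^4 + (1)*x^3*y^6 + (322)*x^4 + (-352)*x^4*y^2 + (-26)*x^4*y^4 + (71)*x^5 + (162)*x^5*y^2 + (3)*x^5*y^4 + (-156)*x^6 + (-34)*x^6*y^2 + (71)*x^7 + (3)*x^7*y^2 + (-14)*x^8 + (1)*x^9) * hC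
    have hneg : x^2 - 2*x - 1 < 0 := by nlinarith
    have hrpos : 0 < 16*(1-x)^4*(x^2-2*x-1)^2 := by
      have h1 := pow_pos (show (0:ℝ) < 1 - x by linarith) 4
      have h2 : 0 < (x^2-2*x-1)^2 := by
        rw [pow_two]; exact mul_pos_of_neg_of_neg hneg hneg
      positivity
    have hlhs : (1 + 20*y^2 - 90*y^4 + 20*y^6 + y^8 - 8*x + 40*x*y^2
        + 40*x*y^4 - 8*x*y^6 + 12*x^2 - 132*x^2*y^2
        + 52*x^2*y^4 + 4*x^2*y^6 + 8*x^3 + 48*x^3*y^2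
        - 24*x^3*y^4 - 26*x^4 + 44*x^4*y^2 + 6*x^4*y^4
        + 8*x^5 - 24*x^5*y^2 + 12*x^6 + 4*x^6*y^2 - 8*x^7 + x^8) * (2-x)^4 ≤ 0 :=
      mul_nonpos_of_nonpos_of_nonneg hre (by positivity)
    linarith

lemma keyQ (x y : ℝ) (hd : x^2 + y^2 < 1) (hrho : y = 0 → x < rhoN)
    (him : 8 * y * (x ^ 2 + y ^ 2 - 1) * (x * (1 - 4*x + x ^ 2) + y ^ 2 * (x - 4)) = 0)
    (hre : 1 + 32*y^2 + 126*y^4 + 32*y^6 + y^8 - 16*x - 208*x*y^2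
        - 208*x*y^4 - 16*x*y^6 + 96*x^2 + 492*x^2*y^2
        + 160*x^2*y^4 + 4*x^2*y^6 - 272*x^3 - 480*x^3*y^2
        - 48*x^3*y^4 + 382*x^4 + 224*x^4*y^2 + 6*x^4*y^4
        - 272*x^5 - 48*x^5*y^2 + 96*x^6 + 4*x^6*y^2
        - 16*x^7 + x^8 ≤ 0) : False := by
  have hx1 : x < 1 := by nlinarith
  have hxm1 : -1 < x := by nlinarith
  by_cases hy : y = 0
  · subst hy
    have h1 := sqrt8_sq; have h2 := sqrt8_nonneg
    have hxr : x < 3 - Real.sqrt 8 := by simpa [rhoN] using hrho rfl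
    have h6 : 0 < 1 - 6*x + x^2 := by nlinarith
    have h4 : 0 < 1 - 4*x + x^2 := by nlinarith
    have e : 1 + 32*(0:ℝ)^2 + 126*(0:ℝ)^4 + 32*(0:ℝ)^6 + (0:ℝ)^8 - 16*x - 208*x*(0:ℝ)^2
        - 208*x*(0:ℝ)^4 - 16*x*(0:ℝ)^6 + 96*x^2 + 492*x^2*(0:ℝ)^2
        + 160*x^2*(0:ℝ)^4 + 4*x^2*(0:ℝ)^6 - 272*x^3 - 480*x^3*(0:ℝ)^2
        - 48*x^3*(0:ℝ)^4 + 382*x^4 + 224*x^4*(0:ℝ)^2 + 6*x^4*(0:ℝ)^4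
        - 272*x^5 - 48*x^5*(0:ℝ)^2 + 96*x^6 + 4*x^6*(0:ℝ)^2
        - 16*x^7 + x^8
        = (1 - 6*x + x^2) * ((1-x)^2 * (1-4*x+x^2)^2) := by ring
    rw [e] at hre
    have hp : 0 < (1-x)^2 * (1-4*x+x^2)^2 := by
      have := pow_pos (show (0:ℝ) < 1 - x by linarith) 2
      have := pow_pos h4 2
      positivity
    nlinarith
  · have hC : x * (1 - 4*x + x ^ 2) + y ^ 2 * (x - 4) = 0 := by
      rcases mul_eq_zero.mp him with h | h
      · rcases mul_eq_zero.mp h with h' | h'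
        · rcases mul_eq_zero.mp h' with h'' | h''
          · norm_num at h''
          · exact absurd h'' hy
        · nlinarith
      · exact h
    have hy2 : 0 < y^2 := by positivity
    have h4x : 0 < 4 - x := by linarith
    have hprod : 0 < x * (1 - 4*x + x^2) := by nlinarith
    have hxpos : 0 < x := by
      rcases lt_trichotomy x 0 with h | h | h
      · have hq : 0 < 1 - 4*x + x^2 := by nlinarith
        have := mul_neg_of_neg_of_pos h hq
        linarith
      · rw [h] at hprod; norm_num at hprod
      · exact h
    have h14 : 0 < 1 - 4*x + x^2 := by
      rcases mul_pos_iff.mp hprod with ⟨_, h⟩ | ⟨h, _⟩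
      · exact h
      · linarith
    have key : (1 + 32*y^2 + 126*y^4 + 32*y^6 + y^8 - 16*x - 208*x*y^2
        - 208*x*y^4 - 16*x*y^6 + 96*x^2 + 492*x^2*y^2
        + 160*x^2*y^4 + 4*x^2*y^6 - 272*x^3 - 480*x^3*y^2
        - 48*x^3*y^4 + 382*x^4 + 224*x^4*y^2 + 6*x^4*y^4
        - 272*x^5 - 48*x^5*y^2 + 96*x^6 + 4*x^6*y^2
        - 16*x^7 + x^8) * (4-x)^4
        = 16*(1-4*x+x^2)*((2-x)^2*(x^2-4*x+2)^2) := by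
      linear_combination ((-2048) + (-8064)*y^2 + (-2048)*y^4 + (-64)*y^6 + (12832)*x + (18848)*x*y^2 + (2544)*x*y^4 + (48)*x*y^6 + (-29584)*x^2 + (-19180)*x^2*y^2 + (-1336)*x^2*y^4 + (-12)*x^2*y^6 + (34273)*x^3 + (10623)*x^3*y^2 + (367)*x^3*y^4 + (1)*x^3*y^6 + (-22588)*x^4 + (-3440)*x^4*y^2 + (-52)*x^4*y^4 + (9023)*x^5 + (654)*x^5*y^2 + (3)*x^5*y^4 + (-2232)*x^6 + (-68)*x^6*y^2 + (335)*x^7 + (3)*x^7*y^2 + (-28)*x^8 + (1)*x^9) * hC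
    have h42 : 0 < x^2 - 4*x + 2 := by nlinarith
    have hrpos : 0 < 16*(1-4*x+x^2)*((2-x)^2*(x^2-4*x+2)^2) := by
      have h1 := pow_pos (show (0:ℝ) < 2 - x by linarith) 2
      have h2 := pow_pos h42 2
      positivity
    have hlhs : (1 + 32*y^2 + 126*y^4 + 32*y^6 + y^8 - 16*x - 208*x*y^2
        - 208*x*y^4 - 16*x*y^6 + 96*x^2 + 492*x^2*y^2
        + 160*x^2*y^4 + 4*x^2*y^6 - 272*x^3 - 480*x^3*y^2
        - 48*x^3*y^4 + 382*x^4 + 224*x^4*y^2 + 6*x^4*y^4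
        - 272*x^5 - 48*x^5*y^2 + 96*x^6 + 4*x^6*y^2
        - 16*x^7 + x^8) * (4-x)^4 ≤ 0 :=
      mul_nonpos_of_nonpos_of_nonneg hre (by positivity)
    linarith

/-! ### Nonvanishing of the two real parts -/

lemma phiR_ne (z : ℂ) (hz : z ∈ Dom) :
    ((1 - (starRingEnd ℂ) z) ^ 2 * (1 + z) * wc z).re ≠ 0 := by
  intro h0
  have hw2 := wsq z hz
  set u : ℂ := (1 - (starRingEnd ℂ) z) ^ 2 * (1 + z) * wc z with hu
  have hu2 : u * u = ((1 - (starRingEnd ℂ) z) ^ 2 * (1 + z)) ^ 2 * (1 - 6 * z + z ^ 2) := by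
    rw [hu]
    linear_combination ((1 - (starRingEnd ℂ) z) ^ 2 * (1 + z)) ^ 2 * hw2
  have him0 : (u * u).im = 0 := by rw [Complex.mul_im, h0]; ring
  have hre0 : (u * u).re ≤ 0 := by
    rw [Complex.mul_re, h0]
    nlinarith [sq_nonneg u.im]
  rw [hu2] at him0 hre0
  rw [P1_im] at him0
  rw [P1_re] at hre0
  exact keyR z.re z.im ((abs_lt_one_iff z).mp hz.1) (dom_re_lt z hz) him0 hre0

lemma phiQ_ne (z : ℂ) (hz : z ∈ Dom) :
    ((1 - 4 * (starRingEnd ℂ) z + ((starRingEnd ℂ) z) ^ 2) * (1 - z) * wc z).re ≠ 0 := by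
  intro h0
  have hw2 := wsq z hz
  set u : ℂ := (1 - 4 * (starRingEnd ℂ) z + ((starRingEnd ℂ) z) ^ 2) * (1 - z) * wc z with hu
  have hu2 : u * u = ((1 - 4 * (starRingEnd ℂ) z + ((starRingEnd ℂ) z) ^ 2) * (1 - z)) ^ 2
      * (1 - 6 * z + z ^ 2) := by
    rw [hu]
    linear_combination ((1 - 4 * (starRingEnd ℂ) z + ((starRingEnd ℂ) z) ^ 2) * (1 - z)) ^ 2 * hw2
  have him0 : (u * u).im = 0 := by rw [Complex.mul_im, h0]; ring
  have hre0 : (u * u).re ≤ 0 := by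
    rw [Complex.mul_re, h0]
    nlinarith [sq_nonneg u.im]
  rw [hu2] at him0 hre0
  rw [P2_im] at him0
  rw [P2_re] at hre0
  exact keyQ z.re z.im ((abs_lt_one_iff z).mp hz.1) (dom_re_lt z hz) him0 hre0

/-! ### Continuity and base-point positivity -/

lemma phiR_cont : ContinuousOn (fun w : ℂ =>
    ((1 - (starRingEnd ℂ) w) ^ 2 * (1 + w) * wc w).re) Dom := by
  apply Complex.continuous_re.comp_continuousOn
  apply ContinuousOn.mul
  · apply Continuous.continuousOn
    exact ((continuous_const.sub Complex.continuous_conj).pow 2).mul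
      (continuous_const.add continuous_id)
  · exact wc_contOn

lemma phiQ_cont : ContinuousOn (fun w : ℂ =>
    ((1 - 4 * (starRingEnd ℂ) w + ((starRingEnd ℂ) w) ^ 2) * (1 - w) * wc w).re) Dom := by
  apply Complex.continuous_re.comp_continuousOn
  apply ContinuousOn.mul
  · apply Continuous.continuousOn
    exact (((continuous_const.sub (continuous_const.mul Complex.continuous_conj)).add
      (Complex.continuous_conj.pow 2)).mul (continuous_const.sub continuous_id))
  · exact wc_contOn

lemma conj_base : (starRingEnd ℂ) (-(1/2) : ℂ) = -(1/2) := by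
  have : (-(1/2) : ℂ) = ((-(1/2) : ℝ) : ℂ) := by norm_num
  rw [this, Complex.conj_ofReal]

lemma phiR_base : 0 < ((1 - (starRingEnd ℂ) (-(1/2):ℂ)) ^ 2 * (1 + (-(1/2):ℂ))
    * wc (-(1/2):ℂ)).re := by
  have e : (1 - (starRingEnd ℂ) (-(1/2):ℂ)) ^ 2 * (1 + (-(1/2):ℂ))
      = (((9:ℝ)/8 : ℝ) : ℂ) := by
    rw [conj_base]; norm_num
  rw [e, Complex.re_ofReal_mul]
  have := re_w_pos (-(1/2):ℂ) base_mem
  nlinarith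

lemma phiQ_base : 0 < ((1 - 4 * (starRingEnd ℂ) (-(1/2):ℂ)
    + ((starRingEnd ℂ) (-(1/2):ℂ)) ^ 2) * (1 - (-(1/2):ℂ)) * wc (-(1/2):ℂ)).re := by
  have e : (1 - 4 * (starRingEnd ℂ) (-(1/2):ℂ) + ((starRingEnd ℂ) (-(1/2):ℂ)) ^ 2)
      * (1 - (-(1/2):ℂ)) = (((39:ℝ)/8 : ℝ) : ℂ) := by
    rw [conj_base]; norm_num
  rw [e, Complex.re_ofReal_mul]
  have := re_w_pos (-(1/2):ℂ) base_mem
  nlinarith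

/-! ### The quotient estimate -/

lemma quot_abs_lt (A B d : ℂ) (hd : d ≠ 0) (hprod : (A - B) * (A + B) = d * d)
    (hre : 0 < (A * (starRingEnd ℂ) B).re) : ‖(A - B) / d‖ < 1 := by
  have habsd : 0 < ‖d‖ := norm_pos_iff.mpr hd
  have h1 : ‖A+B‖ ^ 2 - ‖A-B‖ ^ 2
      = 4 * (A * (starRingEnd ℂ) B).re := by
    rw [Complex.sq_norm, Complex.sq_norm, Complex.normSq_add, Complex.normSq_sub]; ring
  have h2 : ‖A-B‖ * ‖A+B‖ = ‖d‖ ^ 2 := by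
    rw [← norm_mul, hprod, norm_mul, pow_two]
  have hnn1 : 0 ≤ ‖A-B‖ := norm_nonneg _
  have hnn2 : 0 ≤ ‖A+B‖ := norm_nonneg _
  have hABpos : 0 < ‖A-B‖ := by
    rcases eq_or_lt_of_le hnn1 with h | h
    · exfalso; rw [← h] at h2; simp at h2; nlinarith
    · exact h
  have hlt : ‖A-B‖ < ‖A+B‖ := by nlinarith
  have hfin : ‖A-B‖ < ‖d‖ := by nlinarith
  rw [norm_div, div_lt_one habsd]
  exact hfin

/-! ### Main theorem -/

theorem abs_R_lt_one_and_abs_Q_lt_one (z : ℂ)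
    (hz1 : ‖z‖ < 1) (hz0 : z ≠ 0)
    (hzseg : z ∉ (fun x : ℝ => (x : ℂ)) '' Set.Ico rhoN 1) :
    ‖Rc z‖ < 1 ∧ ‖Qc z‖ < 1 := by
  have hz : z ∈ Dom := ⟨hz1, hzseg⟩
  have hw2 := wsq z hz
  have hφR := phi_sign_pos _ phiR_cont phiR_ne phiR_base z hz
  have hφQ := phi_sign_pos _ phiQ_cont phiQ_ne phiQ_base z hz
  constructor
  · have hd : (4 * z : ℂ) ≠ 0 := mul_ne_zero (by norm_num) hz0
    have hprod : ((1 - z) ^ 2 - wc z * (1 + z)) * ((1 - z) ^ 2 + wc z * (1 + z))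
        = (4 * z) * (4 * z) := by
      linear_combination (-(1 + z) ^ 2) * hw2
    have hre : 0 < ((1 - z) ^ 2 * (starRingEnd ℂ) (wc z * (1 + z))).re := by
      have e : (1 - z) ^ 2 * (starRingEnd ℂ) (wc z * (1 + z))
          = (starRingEnd ℂ) ((1 - (starRingEnd ℂ) z) ^ 2 * (1 + z) * wc z) := by
        simp only [map_mul, map_sub, map_pow, map_one, map_add, Complex.conj_conj]
        ring
      rw [e, Complex.conj_re]
      exact hφR
    have h := quot_abs_lt ((1 - z) ^ 2) (wc z * (1 + z)) (4 * z) hd hprod hre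
    have hRc : Rc z = ((1 - z) ^ 2 - wc z * (1 + z)) / (4 * z) := by
      simp only [Rc, Sc, wc]
      field_simp
      ring
    rw [hRc]
    exact h
  · have hd : (2 * z : ℂ) ≠ 0 := mul_ne_zero (by norm_num) hz0
    have hprod : ((1 - 4 * z + z ^ 2) - wc z * (1 - z)) * ((1 - 4 * z + z ^ 2) + wc z * (1 - z))
        = (2 * z) * (2 * z) := by
      linear_combination (-(1 - z) ^ 2) * hw2
    have hre : 0 < ((1 - 4 * z + z ^ 2) * (starRingEnd ℂ) (wc z * (1 - z))).re := by
      have e : (1 - 4 * z + z ^ 2) * (starRingEnd ℂ) (wc z * (1 - z))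
          = (starRingEnd ℂ) ((1 - 4 * (starRingEnd ℂ) z + ((starRingEnd ℂ) z) ^ 2)
              * (1 - z) * wc z) := by
        simp only [map_mul, map_sub, map_pow, map_one, map_add, map_ofNat,
          Complex.conj_conj]
        ring
      rw [e, Complex.conj_re]
      exact hφQ
    have h := quot_abs_lt ((1 - 4 * z + z ^ 2)) (wc z * (1 - z)) (2 * z) hd hprod hre
    have hQc : Qc z = ((1 - 4 * z + z ^ 2) - wc z * (1 - z)) / (2 * z) := by
      simp only [Qc, Sc, wc]
      field_simp
      ring
    rw [hQc]
    exact h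
end
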